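/- arXiv:1509.03901 — 7 statements merged into one kernel-verified Lean document; each statement's English description precedes it below -/
import Mathlib

section
/- Let S₁ ⊇ S₂ ⊇ S₃ ⊇ … be a descending chain of subsets of ℤ such that for every j ∈ ℕ, every translate of S_j is a set of recurrence. Then there exists a set S ⊆ ℤ such that S \ S_j is finite for every j and every translate of S is a set of recurrence. -/
noncomputable section

/-- A measure preserving system: a probability space together with an invertible
measure preserving transformation. -/
structure MPSystem where
  X : Type
  [mX : MeasurableSpace X]
  μ : MeasureTheory.Measure X
  prob : MeasureTheory.IsProbabilityMeasure μ
  T : X ≃ᵐ X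
  mp : MeasureTheory.MeasurePreserving T μ μ

attribute [instance] MPSystem.mX

open MeasureTheory Set Filter

/-- The `n`-th iterate of `T` (`n ∈ ℤ`), as a bijection of `X`; the image
`𝒮.iter n '' D` is the set `T^n D`. -/
def MPSystem.iter (𝒮 : MPSystem) (n : ℤ) : 𝒮.X ≃ 𝒮.X := (𝒮.T.toEquiv) ^ n

/-- The translate `S + m` of a set of integers. -/
def zTranslate (S : Set ℤ) (m : ℤ) : Set ℤ := (fun s => s + m) '' S

/-- `S` is a set of recurrence. -/
def IsRecurrenceSet (S : Set ℤ) : Prop :=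
  ∀ 𝒮 : MPSystem, ∀ D : Set 𝒮.X, MeasurableSet D → 0 < 𝒮.μ D →
    ∃ n ∈ S, 0 < 𝒮.μ (D ∩ 𝒮.iter n '' D)

/-! ### zpow auxiliary lemmas -/

lemma perm_zpow_comm {X Y : Type*} (e : Equiv.Perm X) (u : Equiv.Perm Y) (φ : X → Y)
    (h : ∀ x, φ (e x) = u (φ x)) : ∀ (n : ℤ) (x : X), φ ((e ^ n) x) = (u ^ n) (φ x) := by
  have hsymm : ∀ x, φ (e.symm x) = u.symm (φ x) := by
    intro x
    have h2 := h (e.symm x)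
    rw [Equiv.apply_symm_apply] at h2
    rw [h2, Equiv.symm_apply_apply]
  intro n
  induction n using Int.induction_on with
  | zero => simp
  | succ k ih =>
      intro x
      have h1 : (e ^ ((k : ℤ) + 1)) x = (e ^ (k : ℤ)) (e x) := by
        rw [zpow_add_one]; rfl
      have h2 : (u ^ ((k : ℤ) + 1)) (φ x) = (u ^ (k : ℤ)) (u (φ x)) := by
        rw [zpow_add_one]; rfl
      rw [h1, h2, ih (e x), h x]
  | pred k ih =>
      intro x
      have h1 : (e ^ (-(k : ℤ) - 1)) x = (e ^ (-(k : ℤ))) (e.symm x) := by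
        rw [zpow_sub_one]
        simp [Equiv.Perm.mul_apply, Equiv.Perm.inv_def]
      have h2 : (u ^ (-(k : ℤ) - 1)) (φ x) = (u ^ (-(k : ℤ))) (u.symm (φ x)) := by
        rw [zpow_sub_one]
        simp [Equiv.Perm.mul_apply, Equiv.Perm.inv_def]
      rw [h1, h2, ih (e.symm x), hsymm x]

lemma perm_zpow_continuous {X : Type*} [TopologicalSpace X] (e : Equiv.Perm X)
    (h1 : Continuous e) (h2 : Continuous e.symm) (n : ℤ) : Continuous ⇑(e ^ n) := by
  induction n using Int.induction_on with
  | zero => simpa using continuous_id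
  | succ k ih =>
      rw [zpow_add_one, Equiv.Perm.coe_mul]
      exact ih.comp h1
  | pred k ih =>
      rw [zpow_sub_one, Equiv.Perm.coe_mul, Equiv.Perm.inv_def]
      exact ih.comp h2

lemma perm_zpow_measurable {X : Type*} [MeasurableSpace X] (e : Equiv.Perm X)
    (h1 : Measurable e) (h2 : Measurable e.symm) (n : ℤ) : Measurable ⇑(e ^ n) := by
  induction n using Int.induction_on with
  | zero => simpa using measurable_id
  | succ k ih =>
      rw [zpow_add_one, Equiv.Perm.coe_mul]
      exact ih.comp h1
  | pred k ih =>
      rw [zpow_sub_one, Equiv.Perm.coe_mul, Equiv.Perm.inv_def]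
      exact ih.comp h2

lemma perm_zpow_measurePreserving {X : Type*} [MeasurableSpace X] {μ : Measure X}
    (e : Equiv.Perm X) (h1 : MeasurePreserving e μ μ) (h2 : MeasurePreserving e.symm μ μ)
    (n : ℤ) : MeasurePreserving ⇑(e ^ n) μ μ := by
  induction n using Int.induction_on with
  | zero => simpa using MeasurePreserving.id μ
  | succ k ih =>
      rw [zpow_add_one, Equiv.Perm.coe_mul]
      exact ih.comp h1
  | pred k ih =>
      rw [zpow_sub_one, Equiv.Perm.coe_mul, Equiv.Perm.inv_def]
      exact ih.comp h2

lemma perm_image_zpow {X : Type*} (e : Equiv.Perm X) (n : ℤ) (A : Set X) :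
    ⇑(e ^ n) '' A = ⇑(e ^ (-n)) ⁻¹' A := by
  rw [Equiv.image_eq_preimage_symm]
  rw [← Equiv.Perm.inv_def, ← zpow_neg]

lemma iter_image (𝒮 : MPSystem) (n : ℤ) (D : Set 𝒮.X) :
    𝒮.iter n '' D = ⇑(𝒮.T.toEquiv ^ (-n)) ⁻¹' D :=
  perm_image_zpow _ n D

lemma measurable_T_zpow (𝒮 : MPSystem) (n : ℤ) : Measurable ⇑(𝒮.T.toEquiv ^ n) :=
  perm_zpow_measurable _ 𝒮.T.measurable 𝒮.T.symm.measurable n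

lemma measurableSet_iter_image (𝒮 : MPSystem) (n : ℤ) {D : Set 𝒮.X} (hD : MeasurableSet D) :
    MeasurableSet (𝒮.iter n '' D) := by
  rw [iter_image]
  exact hD.preimage (measurable_T_zpow 𝒮 (-n))

/-! ### ultrafilter limits -/

lemma exists_nnreal_ulim (𝒰 : Ultrafilter ℕ) (f : ℕ → NNReal) (hf : ∀ k, f k ≤ 1) :
    ∃ x : NNReal, Tendsto f ↑𝒰 (nhds x) := by
  obtain ⟨x, -, hx⟩ := (isCompact_Icc (a := (0 : NNReal)) (b := 1)).ultrafilter_le_nhds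
    (𝒰.map f) (by
      rw [le_principal_iff, Ultrafilter.mem_coe, Ultrafilter.mem_map]
      exact Filter.mem_of_superset Filter.univ_mem (fun k _ => ⟨zero_le, hf k⟩))
  refine ⟨x, ?_⟩
  rw [Tendsto, ← Ultrafilter.coe_map]
  exact hx
  

/-! ### The shift space -/

abbrev ShiftSpace : Type := ℤ → Bool

def shiftEquiv : Equiv.Perm ShiftSpace where
  toFun y := fun i => y (i - 1)
  invFun y := fun i => y (i + 1)
  left_inv y := by funext i; simp
  right_inv y := by funext i; simp

lemma shiftEquiv_continuous : Continuous shiftEquiv :=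
  continuous_pi fun i => continuous_apply (i - 1)

lemma shiftEquiv_symm_continuous : Continuous shiftEquiv.symm :=
  continuous_pi fun i => continuous_apply (i + 1)

def shiftHomeo : ShiftSpace ≃ₜ ShiftSpace :=
  ⟨shiftEquiv, shiftEquiv_continuous, shiftEquiv_symm_continuous⟩

def shiftME : ShiftSpace ≃ᵐ ShiftSpace := shiftHomeo.toMeasurableEquiv

def cylZero : Set ShiftSpace := (fun y : ShiftSpace => y 0) ⁻¹' {true}

lemma isClopen_cylZero : IsClopen cylZero :=
  (isClopen_discrete {true}).preimage (continuous_apply 0)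

lemma isClopen_shift_zpow (n : ℤ) : IsClopen (⇑(shiftEquiv ^ n) '' cylZero) := by
  rw [perm_image_zpow]
  exact isClopen_cylZero.preimage
    (perm_zpow_continuous _ shiftEquiv_continuous shiftEquiv_symm_continuous _)

lemma sep_clopen_compact : ∀ K₁ K₂ : Set ShiftSpace, IsCompact K₁ → IsCompact K₂ →
    Disjoint K₁ K₂ → ∃ U, IsClopen U ∧ K₁ ⊆ U ∧ Disjoint U K₂ := by
  have hsepPt : ∀ x y : ShiftSpace, x ≠ y → ∃ V, IsClopen V ∧ x ∈ V ∧ y ∉ V := by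
    intro x y hxy
    obtain ⟨i, hi⟩ := Function.ne_iff.1 hxy
    refine ⟨(fun z : ShiftSpace => z i) ⁻¹' {x i},
      (isClopen_discrete {x i}).preimage (continuous_apply i), rfl, ?_⟩
    simpa using fun h => hi h.symm
  have hpt : ∀ (K : Set ShiftSpace), IsCompact K → ∀ x ∉ K,
      ∃ U, IsClopen U ∧ x ∈ U ∧ Disjoint U K := by
    intro K hK x hx
    choose W hW hyW hxW using fun y : K => hsepPt y x (fun h => hx (h ▸ y.2))
    obtain ⟨t, ht⟩ := hK.elim_finite_subcover W (fun y => (hW y).isOpen)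
      (fun z hz => mem_iUnion.2 ⟨⟨z, hz⟩, hyW _⟩)
    refine ⟨(⋃ y ∈ t, W y)ᶜ,
      (Set.Finite.isClopen_biUnion t.finite_toSet (fun y _ => hW y)).compl, ?_, ?_⟩
    · simp only [mem_compl_iff, mem_iUnion]
      rintro ⟨y, -, hy⟩
      exact hxW y hy
    · exact disjoint_compl_left.mono_right ht
  intro K₁ K₂ hK₁ hK₂ hd
  choose U hU hxU hUK using fun x : K₁ => hpt K₂ hK₂ x (disjoint_left.1 hd x.2)
  obtain ⟨t, ht⟩ := hK₁.elim_finite_subcover U (fun x => (hU x).isOpen)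
    (fun z hz => mem_iUnion.2 ⟨⟨z, hz⟩, hxU _⟩)
  refine ⟨⋃ x ∈ t, U x, Set.Finite.isClopen_biUnion t.finite_toSet (fun x _ => hU x), ht, ?_⟩
  rw [disjoint_left]
  intro z hz hz2
  rw [mem_iUnion₂] at hz
  obtain ⟨x, -, hzx⟩ := hz
  exact disjoint_left.1 (hUK x) hzx hz2

open TopologicalSpace in
lemma uniform_recurrence {S : Set ℤ} (hS : IsRecurrenceSet S) (ε : NNReal) (hε : 0 < ε) :
    ∃ F : Finset ℤ, (↑F : Set ℤ) ⊆ S ∧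
      ∀ (𝒮 : MPSystem) (D : Set 𝒮.X), MeasurableSet D → (ε : ENNReal) ≤ 𝒮.μ D →
        ∃ n ∈ F, 0 < 𝒮.μ (D ∩ 𝒮.iter n '' D) := by
  classical
  by_contra hcon
  push_neg at hcon
  set Fk : ℕ → Finset ℤ := fun k => (Finset.Icc (-(k : ℤ)) k).filter (fun n => n ∈ S) with hFk
  have hFkS : ∀ k, (↑(Fk k) : Set ℤ) ⊆ S := by
    intro k n hn
    simp only [hFk, Finset.coe_filter, Finset.mem_Icc, mem_setOf_eq] at hn
    exact hn.2
  have hmemFk : ∀ n ∈ S, ∀ k : ℕ, n.natAbs ≤ k → n ∈ Fk k := by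
    intro n hn k hk
    simp only [hFk, Finset.mem_filter, Finset.mem_Icc]
    exact ⟨by omega, hn⟩
  choose 𝓢 D hD hεD hzero using fun k => hcon (Fk k) (hFkS k)
  haveI : ∀ k, IsProbabilityMeasure (𝓢 k).μ := fun k => (𝓢 k).prob
  -- the factor maps to the shift space
  set φ : ∀ k, (𝓢 k).X → ShiftSpace :=
    fun k x n => if ((𝓢 k).T.toEquiv ^ (-n)) x ∈ D k then true else false with hφdef
  have hφmeas : ∀ k, Measurable (φ k) := by
    intro k
    refine measurable_pi_iff.2 fun n => Measurable.ite ?_ measurable_const measurable_const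
    exact (measurable_T_zpow (𝓢 k) (-n)) (hD k)
  have hφT : ∀ k x, φ k ((𝓢 k).T x) = shiftEquiv (φ k x) := by
    intro k x
    funext n
    have h1 : (-(n - 1) : ℤ) = -n + 1 := by ring
    show (if ((𝓢 k).T.toEquiv ^ (-n)) ((𝓢 k).T x) ∈ D k then true else false)
      = (if ((𝓢 k).T.toEquiv ^ (-(n - 1))) x ∈ D k then true else false)
    rw [h1, zpow_add_one]
    rfl
  have hφTn : ∀ k (n : ℤ) x, φ k (((𝓢 k).T.toEquiv ^ n) x) = (shiftEquiv ^ n) (φ k x) :=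
    fun k => perm_zpow_comm _ _ _ (hφT k)
  set ν : ℕ → Measure ShiftSpace := fun k => Measure.map (φ k) (𝓢 k).μ with hνdef
  haveI : ∀ k, IsProbabilityMeasure (ν k) := fun k => Measure.isProbabilityMeasure_map (hφmeas k).aemeasurable
  have hφcyl : ∀ k, φ k ⁻¹' cylZero = D k := by
    intro k
    ext x
    simp only [cylZero, mem_preimage, mem_singleton_iff, hφdef]
    by_cases hx : x ∈ D k <;> simp [hx]
  have hφkey : ∀ k (n : ℤ),
      φ k ⁻¹' (cylZero ∩ ⇑(shiftEquiv ^ n) '' cylZero) = D k ∩ (𝓢 k).iter n '' D k := by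
    intro k n
    rw [preimage_inter, hφcyl, iter_image, perm_image_zpow, ← preimage_comp,
      show ⇑(shiftEquiv ^ (-n)) ∘ φ k = φ k ∘ ⇑((𝓢 k).T.toEquiv ^ (-n)) from
        funext fun x => (hφTn k (-n) x).symm,
      preimage_comp, hφcyl]
  have hνval : ∀ k (n : ℤ), ν k (cylZero ∩ ⇑(shiftEquiv ^ n) '' cylZero)
      = (𝓢 k).μ (D k ∩ (𝓢 k).iter n '' D k) := by
    intro k n
    rw [hνdef]
    rw [Measure.map_apply (hφmeas k)
      (isClopen_cylZero.inter (isClopen_shift_zpow n)).isOpen.measurableSet, hφkey]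
  have hνcyl : ∀ k, ν k cylZero = (𝓢 k).μ (D k) := by
    intro k
    rw [hνdef, Measure.map_apply (hφmeas k) isClopen_cylZero.isOpen.measurableSet, hφcyl]
  have hsm : Measurable ⇑shiftEquiv.symm := shiftEquiv_symm_continuous.measurable
  have hνinv : ∀ k, Measure.map (⇑shiftEquiv.symm) (ν k) = ν k := by
    intro k
    rw [hνdef, Measure.map_map hsm (hφmeas k)]
    have hcomm : ⇑shiftEquiv.symm ∘ φ k = φ k ∘ ⇑(𝓢 k).T.symm := by
      funext x
      have h2 := hφT k ((𝓢 k).T.symm x)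
      rw [MeasurableEquiv.apply_symm_apply] at h2
      simp [Function.comp, h2]
    rw [hcomm, ← Measure.map_map (hφmeas k) (𝓢 k).T.symm.measurable,
      ((𝓢 k).mp.symm (𝓢 k).T).map_eq]
  -- the ultrafilter limit
  set 𝒰 : Ultrafilter ℕ := Ultrafilter.of Filter.atTop with h𝒰
  have h𝒰le : ↑𝒰 ≤ (Filter.atTop : Filter ℕ) := Ultrafilter.of_le _
  have hbound : ∀ (A : Set ShiftSpace) (k : ℕ), (ν k A).toNNReal ≤ 1 := by
    intro A k
    have h1 : (ν k A).toNNReal ≤ (1 : ENNReal).toNNReal :=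
      ENNReal.toNNReal_mono ENNReal.one_ne_top prob_le_one
    simpa using h1
  choose m hm using fun A : Set ShiftSpace =>
    exists_nnreal_ulim 𝒰 (fun k => (ν k A).toNNReal) (hbound A)
  have hνne : ∀ (k : ℕ) (A : Set ShiftSpace), ν k A ≠ ⊤ := fun k A => measure_ne_top _ A
  have hm_mono : ∀ {A B : Set ShiftSpace}, A ⊆ B → m A ≤ m B := by
    intro A B hAB
    exact le_of_tendsto_of_tendsto' (hm A) (hm B)
      fun k => ENNReal.toNNReal_mono (hνne k B) (measure_mono hAB)
  have hm_add : ∀ {A B : Set ShiftSpace}, Disjoint A B → MeasurableSet B →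
      m (A ∪ B) = m A + m B := by
    intro A B hd hB
    refine tendsto_nhds_unique (hm (A ∪ B)) (Tendsto.congr (fun k => ?_) ((hm A).add (hm B)))
    rw [measure_union hd hB, ENNReal.toNNReal_add (hνne _ _) (hνne _ _)]
  have hm_univ : m univ = 1 := by
    refine tendsto_nhds_unique (hm univ) ?_
    have : ∀ k : ℕ, (ν k univ).toNNReal = 1 := fun k => by simp [measure_univ]
    simpa [this] using tendsto_const_nhds
  have hm_eps : ε ≤ m cylZero := by
    refine ge_of_tendsto (hm cylZero) (Filter.Eventually.of_forall fun k => ?_)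
    rw [hνcyl]
    have h2 := ENNReal.toNNReal_mono (measure_ne_top _ _) (hεD k)
    rwa [ENNReal.toNNReal_coe] at h2
  have hm_zero : ∀ n ∈ S, m (cylZero ∩ ⇑(shiftEquiv ^ n) '' cylZero) = 0 := by
    intro n hn
    refine tendsto_nhds_unique (hm _) ?_
    have hev : ∀ᶠ k in (Filter.atTop : Filter ℕ),
        (fun k => (ν k (cylZero ∩ ⇑(shiftEquiv ^ n) '' cylZero)).toNNReal) k
          = (fun _ => (0 : NNReal)) k := by
      filter_upwards [Filter.eventually_ge_atTop n.natAbs] with k hk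
      have h0 : (𝓢 k).μ (D k ∩ (𝓢 k).iter n '' D k) = 0 :=
        le_antisymm (hzero k n (hmemFk n hn k hk)) zero_le
      simp [hνval k n, h0]
    exact (tendsto_congr' (hev.filter_mono h𝒰le)).2 tendsto_const_nhds
  have hm_shift : ∀ {C : Set ShiftSpace}, MeasurableSet C → m (⇑shiftEquiv '' C) = m C := by
    intro C hC
    refine tendsto_nhds_unique (hm (⇑shiftEquiv '' C)) (Tendsto.congr (fun k => ?_) (hm C))
    congr 1
    rw [Equiv.image_eq_preimage_symm, ← Measure.map_apply hsm hC, hνinv k]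
  -- the content and its measure
  set lam : Set ShiftSpace → NNReal := fun K => sInf (m '' {C | IsClopen C ∧ K ⊆ C}) with hlamdef
  have hlam_ne : ∀ K : Set ShiftSpace, (m '' {C | IsClopen C ∧ K ⊆ C}).Nonempty :=
    fun K => ⟨m univ, univ, ⟨isClopen_univ, subset_univ _⟩, rfl⟩
  have hlam_le : ∀ {K C : Set ShiftSpace}, IsClopen C → K ⊆ C → lam K ≤ m C :=
    fun hC hKC => csInf_le (OrderBot.bddBelow _) ⟨_, ⟨hC, hKC⟩, rfl⟩
  have hle_lam : ∀ {K : Set ShiftSpace} {x : NNReal},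
      (∀ C, IsClopen C → K ⊆ C → x ≤ m C) → x ≤ lam K := by
    intro K x h
    refine le_csInf (hlam_ne _) ?_
    rintro b ⟨C, ⟨h1, h2⟩, rfl⟩
    exact h C h1 h2
  have hm_subadd : ∀ C₁ C₂ : Set ShiftSpace, IsClopen C₁ → IsClopen C₂ →
      m (C₁ ∪ C₂) ≤ m C₁ + m C₂ := by
    intro C₁ C₂ h₁ h₂
    rw [← union_diff_self, hm_add disjoint_sdiff_self_right
      (h₂.isOpen.measurableSet.diff h₁.isOpen.measurableSet)]
    exact add_le_add le_rfl (hm_mono diff_subset)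
  have hlam_union_le : ∀ K₁ K₂ : Set ShiftSpace, lam (K₁ ∪ K₂) ≤ lam K₁ + lam K₂ := by
    intro K₁ K₂
    have h1 : ∀ C₁, IsClopen C₁ → K₁ ⊆ C₁ → ∀ C₂, IsClopen C₂ → K₂ ⊆ C₂ →
        lam (K₁ ∪ K₂) ≤ m C₁ + m C₂ := fun C₁ h₁ hK₁ C₂ h₂ hK₂ =>
      (hlam_le (h₁.union h₂) (union_subset_union hK₁ hK₂)).trans (hm_subadd _ _ h₁ h₂)
    have h2 : lam (K₁ ∪ K₂) - lam K₁ ≤ lam K₂ := by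
      refine hle_lam fun C₂ hC₂ hKC₂ => tsub_le_iff_left.mpr ?_
      have h3 : lam (K₁ ∪ K₂) - m C₂ ≤ lam K₁ :=
        hle_lam fun C₁ h₁ hK₁ => tsub_le_iff_right.mpr (h1 C₁ h₁ hK₁ C₂ hC₂ hKC₂)
      have h4 := tsub_le_iff_right.mp h3
      calc lam (K₁ ∪ K₂) ≤ lam K₁ + m C₂ := h4
        _ = lam K₁ + m C₂ := rfl
    exact tsub_le_iff_left.mp h2
  let cont : Content ShiftSpace :=
    { toFun := fun K => lam K.1
      mono' := fun K₁ K₂ h => hle_lam fun C hC hKC => hlam_le hC (h.trans hKC)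
      sup_le' := fun K₁ K₂ => by
        simpa [Compacts.coe_sup] using hlam_union_le K₁.1 K₂.1
      sup_disjoint' := by
        intro K₁ K₂ hd h₁ h₂
        refine le_antisymm (by simpa [Compacts.coe_sup] using hlam_union_le K₁.1 K₂.1) ?_
        obtain ⟨U, hU, hK₁U, hUK₂⟩ := sep_clopen_compact K₁.1 K₂.1 K₁.2 K₂.2 hd
        show lam K₁.1 + lam K₂.1 ≤ lam (K₁.1 ∪ K₂.1)
        refine hle_lam fun C hC hKC => ?_
        have e1 : lam K₁.1 ≤ m (C ∩ U) :=
          hlam_le (hC.inter hU) (subset_inter ((subset_union_left).trans hKC) hK₁U)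
        have e2 : lam K₂.1 ≤ m (C \ U) := by
          refine hlam_le (hC.inter hU.compl) (subset_diff.2 ⟨(subset_union_right).trans hKC, ?_⟩)
          exact hUK₂.symm
        have e3 : Disjoint (C ∩ U) (C \ U) :=
          disjoint_left.2 fun z hz1 hz2 => hz2.2 hz1.2
        have e4 : m (C ∩ U) + m (C \ U) = m C := by
          rw [← hm_add e3 (hC.isOpen.measurableSet.diff hU.isOpen.measurableSet),
            inter_union_diff]
        calc lam K₁.1 + lam K₂.1 ≤ m (C ∩ U) + m (C \ U) := add_le_add e1 e2
          _ = m C := e4 }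
  have hμclopen : ∀ {C : Set ShiftSpace}, IsClopen C → cont.measure C = (m C : ENNReal) := by
    intro C hC
    rw [cont.measure_apply hC.isOpen.measurableSet, cont.outerMeasure_of_isOpen C hC.isOpen,
      cont.innerContent_of_isCompact (hC.isClosed.isCompact) hC.isOpen]
    exact_mod_cast congrArg _
      (le_antisymm (hlam_le hC subset_rfl) (hle_lam fun C' h1 h2 => hm_mono h2))
  have hprob : IsProbabilityMeasure cont.measure := by
    constructor
    rw [hμclopen isClopen_univ, hm_univ]
    rfl
  have hKmap : ∀ ⦃K : Compacts ShiftSpace⦄,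
      (fun s : Compacts ShiftSpace => ((cont.toFun s : NNReal) : ENNReal))
        (K.map ⇑shiftHomeo shiftHomeo.continuous)
      = (fun s : Compacts ShiftSpace => ((cont.toFun s : NNReal) : ENNReal)) K := by
    intro K
    simp only [Compacts.coe_map]
    norm_cast
    show lam (⇑shiftEquiv '' K.1) = lam K.1
    apply le_antisymm
    · refine hle_lam fun C hC hKC => ?_
      have h1 : lam (⇑shiftEquiv '' K.1) ≤ m (⇑shiftEquiv '' C) := by
        refine hlam_le ?_ (image_mono hKC)
        rw [Equiv.image_eq_preimage_symm]
        exact hC.preimage shiftEquiv_symm_continuous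
      exact h1.trans_eq (hm_shift hC.isOpen.measurableSet)
    · refine hle_lam fun C hC hKC => ?_
      have hKsub : K.1 ⊆ ⇑shiftEquiv.symm '' C := by
        have := image_mono (f := ⇑shiftEquiv.symm) hKC
        rwa [Equiv.symm_image_image] at this
      have hCclopen : IsClopen (⇑shiftEquiv.symm '' C) := by
        rw [Equiv.image_eq_preimage_symm]
        simpa using hC.preimage shiftEquiv_continuous
      have h1 : lam K.1 ≤ m (⇑shiftEquiv.symm '' C) := hlam_le hCclopen hKsub
      have h2 : m (⇑shiftEquiv '' (⇑shiftEquiv.symm '' C)) = m (⇑shiftEquiv.symm '' C) :=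
        hm_shift (hCclopen.isOpen.measurableSet)
      rw [show ⇑shiftEquiv '' (⇑shiftEquiv.symm '' C) = C from by
        rw [← Set.image_comp, Equiv.self_comp_symm, Set.image_id]] at h2
      exact h1.trans h2.symm.le
  have hinv : MeasurePreserving (⇑shiftME) cont.measure cont.measure := by
    refine ⟨shiftME.measurable, ?_⟩
    apply Measure.ext
    intro s hs
    rw [Measure.map_apply shiftME.measurable hs,
      cont.measure_apply (hs.preimage shiftME.measurable), cont.measure_apply hs]
    exact cont.outerMeasure_preimage shiftHomeo hKmap s
  let 𝒮lim : MPSystem := @MPSystem.mk ShiftSpace _ cont.measure hprob shiftME hinv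
  obtain ⟨n, hnS, hpos⟩ := hS 𝒮lim cylZero isClopen_cylZero.isOpen.measurableSet (by
    show 0 < cont.measure cylZero
    rw [hμclopen isClopen_cylZero]
    have : (0 : ENNReal) < (ε : ENNReal) := by exact_mod_cast hε
    exact this.trans_le (by exact_mod_cast hm_eps))
  have hfin : 𝒮lim.μ (cylZero ∩ 𝒮lim.iter n '' cylZero) = 0 := by
    show cont.measure (cylZero ∩ ⇑(shiftEquiv ^ n) '' cylZero) = 0
    rw [hμclopen (isClopen_cylZero.inter (isClopen_shift_zpow n)), hm_zero n hnS]
    rfl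
  rw [hfin] at hpos
  exact lt_irrefl _ hpos

/-- If `S₁ ⊇ S₂ ⊇ ⋯` is a descending chain of subsets of `ℤ` such that every translate
of each `S_j` is a set of recurrence, then there is a set `S` with `S \ S_j` finite for
every `j`, every translate of which is a set of recurrence. -/
theorem statement8 (S : ℕ → Set ℤ) (hchain : ∀ j : ℕ, S (j + 1) ⊆ S j)
    (hrec : ∀ (j : ℕ) (m : ℤ), IsRecurrenceSet (zTranslate (S j) m)) :
    ∃ S' : Set ℤ, (∀ j : ℕ, (S' \ S j).Finite) ∧
      ∀ m : ℤ, IsRecurrenceSet (zTranslate S' m) := by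
  classical
  have hanti : ∀ i j : ℕ, i ≤ j → S j ⊆ S i := by
    intro i j h
    induction h with
    | refl => exact subset_rfl
    | step hn ih => exact (hchain _).trans ih
  let eqv : ℤ × ℕ ≃ ℕ := Denumerable.eqv (ℤ × ℕ)
  let e : ℕ → ℤ × ℕ := fun k => eqv.symm k
  have hεpos : ∀ k : ℕ, (0 : NNReal) < (((e k).2 : NNReal) + 1)⁻¹ := fun k => by positivity
  choose F hFsub hFuni using fun k : ℕ =>
    uniform_recurrence (hrec k (e k).1) (((e k).2 : NNReal) + 1)⁻¹ (hεpos k)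
  have himg : ∀ k : ℕ, (fun n => n - (e k).1) '' (F k : Set ℤ) ⊆ S k := by
    rintro k x ⟨n, hn, rfl⟩
    obtain ⟨s, hs, rfl⟩ := hFsub k hn
    simpa using hs
  refine ⟨⋃ k, (fun n => n - (e k).1) '' (F k : Set ℤ), ?_, ?_⟩
  · intro j
    have hfin : (⋃ k ∈ Finset.range j, (fun n => n - (e k).1) '' (F k : Set ℤ)).Finite :=
      Set.Finite.biUnion (Finset.range j).finite_toSet
        (fun k _ => ((F k).finite_toSet.image _))
    refine hfin.subset ?_
    rintro x ⟨hx1, hx2⟩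
    obtain ⟨k, hk⟩ := mem_iUnion.1 hx1
    rcases lt_or_ge k j with h | h
    · exact Set.mem_biUnion (Finset.mem_range.2 h) hk
    · exact absurd (hanti j k h (himg k hk)) hx2
  · intro mtr 𝒮 D hD hpos
    obtain ⟨l, hl⟩ := ENNReal.exists_inv_nat_lt (ne_of_gt hpos)
    set k₀ : ℕ := eqv (mtr, l) with hk₀
    have hek : e k₀ = (mtr, l) := Equiv.symm_apply_apply _ _
    have hεle : (((((e k₀).2 : NNReal) + 1)⁻¹ : NNReal) : ENNReal) ≤ 𝒮.μ D := by
      rw [hek]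
      show ((((l : NNReal) + 1)⁻¹ : NNReal) : ENNReal) ≤ 𝒮.μ D
      have h1 : ((((l : NNReal) + 1)⁻¹ : NNReal) : ENNReal) = ((l : ENNReal) + 1)⁻¹ := by
        rw [ENNReal.coe_inv (by positivity)]
        push_cast
        rfl
      rw [h1]
      refine le_trans ?_ hl.le
      exact ENNReal.inv_le_inv.2 le_self_add
    obtain ⟨n, hnF, hpos'⟩ := hFuni k₀ 𝒮 D hD hεle
    refine ⟨n, ?_, hpos'⟩
    refine ⟨n - mtr, ?_, by ring⟩
    refine mem_iUnion.2 ⟨k₀, ?_⟩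
    exact ⟨n, hnF, by rw [hek]⟩
end
end

section
/- If (X,μ,T) is a nontrivial weak mixing measure preserving system, S is a set of rigidity for (X,μ,T), and m ∈ ℤ \ {0}, then S + m is not a set of strong recurrence for (X,μ,T). -/
noncomputable section

open MeasureTheory Set Filter

/-- The system is weak mixing. -/
def IsWeakMixing (𝒮 : MPSystem) : Prop :=
  ∀ D E : Set 𝒮.X, MeasurableSet D → MeasurableSet E →
    Tendsto (fun N : ℕ =>
        (∑ n ∈ Finset.range N,
          |(𝒮.μ (D ∩ 𝒮.iter (-(n : ℤ)) '' E)).toReal - (𝒮.μ D).toReal * (𝒮.μ E).toReal|) / N)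
      atTop (nhds 0)

/-- The system is nontrivial: some measurable set has measure strictly between 0 and 1. -/
def IsNontrivialSystem (𝒮 : MPSystem) : Prop :=
  ∃ D : Set 𝒮.X, MeasurableSet D ∧ 0 < 𝒮.μ D ∧ 𝒮.μ D < 1

/-- `S` is a set of rigidity for the system `𝒮`. -/
def IsRigiditySetFor (S : Set ℤ) (𝒮 : MPSystem) : Prop :=
  S.Infinite ∧ ∀ D : Set 𝒮.X, MeasurableSet D → ∀ ε : ℝ, 0 < ε →
    {n ∈ S | ε < (𝒮.μ (symmDiff D (𝒮.iter n '' D))).toReal}.Finite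

/-- `S` is a set of strong recurrence for the system `𝒮`. -/
def IsStrongRecurrenceSetFor (S : Set ℤ) (𝒮 : MPSystem) : Prop :=
  ∀ D : Set 𝒮.X, MeasurableSet D → 0 < 𝒮.μ D →
    ∃ c : ℝ, 0 < c ∧ {n ∈ S | c < (𝒮.μ (D ∩ 𝒮.iter n '' D)).toReal}.Infinite

/-- `S` is a set of strong recurrence. -/
def IsStrongRecurrenceSet (S : Set ℤ) : Prop :=
  ∀ 𝒮 : MPSystem, IsStrongRecurrenceSetFor S 𝒮

/-- `S` is a WM set of strong recurrence. -/
def IsWMStrongRecurrenceSet (S : Set ℤ) : Prop :=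
  ∀ 𝒮 : MPSystem, IsNontrivialSystem 𝒮 → IsWeakMixing 𝒮 → IsStrongRecurrenceSetFor S 𝒮

namespace MPSystem
variable (𝒮 : MPSystem)

lemma iter_mp : ∀ n : ℤ, MeasurePreserving (𝒮.iter n) 𝒮.μ 𝒮.μ := by
  have hT : MeasurePreserving (𝒮.T.toEquiv) 𝒮.μ 𝒮.μ := 𝒮.mp
  have hTs : MeasurePreserving (𝒮.T.toEquiv.symm) 𝒮.μ 𝒮.μ := by
    have := (𝒮.mp).symm 𝒮.T
    exact this
  intro n
  induction n using Int.induction_on with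
  | zero => simpa [MPSystem.iter] using MeasurePreserving.id 𝒮.μ
  | succ k ih =>
      have h : (𝒮.iter (k+1) : 𝒮.X → 𝒮.X) = 𝒮.iter k ∘ 𝒮.T.toEquiv := by
        funext x
        simp [MPSystem.iter, zpow_add_one, Equiv.Perm.mul_apply]
      rw [h]; exact ih.comp hT
  | pred k ih =>
      have h : (𝒮.iter (-k-1) : 𝒮.X → 𝒮.X) = 𝒮.iter (-k) ∘ 𝒮.T.toEquiv.symm := by
        funext x
        simp [MPSystem.iter, zpow_sub_one, Equiv.Perm.mul_apply, Equiv.Perm.inv_def]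
      rw [h]; exact ih.comp hTs

lemma iter_symm (n : ℤ) : (𝒮.iter n).symm = 𝒮.iter (-n) := by
  simp [MPSystem.iter, zpow_neg, Equiv.Perm.inv_def]

lemma iter_image_eq_preimage (n : ℤ) (D : Set 𝒮.X) :
    𝒮.iter n '' D = 𝒮.iter (-n) ⁻¹' D := by
  rw [Equiv.image_eq_preimage_symm, iter_symm]

lemma measurableSet_iter_image (n : ℤ) {D : Set 𝒮.X} (hD : MeasurableSet D) :
    MeasurableSet (𝒮.iter n '' D) := by
  rw [iter_image_eq_preimage]
  exact hD.preimage (𝒮.iter_mp (-n)).measurable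

lemma measure_iter_image (n : ℤ) {D : Set 𝒮.X} (hD : MeasurableSet D) :
    𝒮.μ (𝒮.iter n '' D) = 𝒮.μ D := by
  rw [iter_image_eq_preimage]
  exact (𝒮.iter_mp (-n)).measure_preimage hD.nullMeasurableSet

lemma iter_image_add (a b : ℤ) (D : Set 𝒮.X) :
    𝒮.iter (a + b) '' D = 𝒮.iter a '' (𝒮.iter b '' D) := by
  rw [← Set.image_comp]
  congr 1
  funext x
  simp [MPSystem.iter, zpow_add, Equiv.Perm.mul_apply]

lemma iter_image_symmDiff (n : ℤ) (A B : Set 𝒮.X) :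
    𝒮.iter n '' (symmDiff A B) = symmDiff (𝒮.iter n '' A) (𝒮.iter n '' B) := by
  simp [Set.symmDiff_def, Set.image_union, Set.image_diff (𝒮.iter n).injective]

lemma iter_zero_image (D : Set 𝒮.X) : 𝒮.iter 0 '' D = D := by
  simp [MPSystem.iter]

end MPSystem
open MPSystem

lemma measure_inter_of_symmDiff_null (𝒮 : MPSystem) {A B : Set 𝒮.X}
    (h : 𝒮.μ (symmDiff A B) = 0) : 𝒮.μ (A ∩ B) = 𝒮.μ A := by
  have hsub : symmDiff A (A ∩ B) ⊆ symmDiff A B := by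
    intro x hx
    simp only [Set.mem_symmDiff, Set.mem_inter_iff] at hx ⊢
    tauto
  have h0 : 𝒮.μ (symmDiff A (A ∩ B)) = 0 :=
    le_antisymm (h ▸ measure_mono hsub) zero_le
  exact (measure_congr (MeasureTheory.measure_symmDiff_eq_zero_iff.mp h0)).symm

/-- In a nontrivial weak mixing system, for `m ≠ 0` there is a measurable set
whose symmetric difference with its `m`-translate has positive measure. -/
lemma exists_symmDiff_pos (𝒮 : MPSystem) (hnt : IsNontrivialSystem 𝒮)
    (hwm : IsWeakMixing 𝒮) (m : ℤ) (hm : m ≠ 0) :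
    ∃ D : Set 𝒮.X, MeasurableSet D ∧ 0 < 𝒮.μ (symmDiff D (𝒮.iter m '' D)) := by
  haveI := 𝒮.prob
  by_contra hcon
  push_neg at hcon
  have H : ∀ D : Set 𝒮.X, MeasurableSet D → 𝒮.μ (symmDiff D (𝒮.iter m '' D)) = 0 := by
    intro D hD
    exact le_antisymm (hcon D hD) zero_le
  -- also for -m
  have H' : ∀ D : Set 𝒮.X, MeasurableSet D → 𝒮.μ (symmDiff D (𝒮.iter (-m) '' D)) = 0 := by
    intro D hD
    have h1 := H (𝒮.iter (-m) '' D) (𝒮.measurableSet_iter_image (-m) hD)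
    have h2 : 𝒮.iter m '' (𝒮.iter (-m) '' D) = D := by
      rw [← iter_image_add, add_neg_cancel, iter_zero_image]
    rw [h2, symmDiff_comm] at h1
    exact h1
  -- all multiples of m
  have Hmul : ∀ t : ℤ, ∀ D : Set 𝒮.X, MeasurableSet D →
      𝒮.μ (symmDiff D (𝒮.iter (m * t) '' D)) = 0 := by
    intro t
    induction t using Int.induction_on with
    | zero => intro D hD; simp [iter_zero_image]
    | succ k ih =>
        intro D hD
        have hB := 𝒮.measurableSet_iter_image m hD
        have key : 𝒮.iter (m * (k + 1)) '' D = 𝒮.iter (m * k) '' (𝒮.iter m '' D) := by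
          rw [← iter_image_add]; ring_nf
        have htri : symmDiff D (𝒮.iter (m*(k+1)) '' D) ⊆
            symmDiff D (𝒮.iter (m*k) '' D) ∪
            symmDiff (𝒮.iter (m*k) '' D) (𝒮.iter (m*(k+1)) '' D) := by
          exact_mod_cast symmDiff_triangle D (𝒮.iter (m*k) '' D) (𝒮.iter (m*(k+1)) '' D)
        have h2 : 𝒮.μ (symmDiff (𝒮.iter (m*k) '' D) (𝒮.iter (m*(k+1)) '' D)) = 0 := by
          rw [key, ← iter_image_symmDiff, measure_iter_image]
          · exact H D hD
          · exact (hD.symmDiff hB)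
        refine le_antisymm ?_ zero_le
        calc 𝒮.μ (symmDiff D (𝒮.iter (m*(k+1)) '' D)) ≤ _ := measure_mono htri
          _ ≤ 𝒮.μ (symmDiff D (𝒮.iter (m*k) '' D)) +
              𝒮.μ (symmDiff (𝒮.iter (m*k) '' D) (𝒮.iter (m*(k+1)) '' D)) := measure_union_le _ _
          _ ≤ 0 := by rw [ih D hD, h2, add_zero]
    | pred k ih =>
        intro D hD
        have hB := 𝒮.measurableSet_iter_image (-m) hD
        have key : 𝒮.iter (m * (-k - 1)) '' D = 𝒮.iter (m * (-k)) '' (𝒮.iter (-m) '' D) := by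
          rw [← iter_image_add]; ring_nf
        have htri : symmDiff D (𝒮.iter (m*(-k-1)) '' D) ⊆
            symmDiff D (𝒮.iter (m*(-k)) '' D) ∪
            symmDiff (𝒮.iter (m*(-k)) '' D) (𝒮.iter (m*(-k-1)) '' D) :=
          symmDiff_triangle _ _ _
        have h2 : 𝒮.μ (symmDiff (𝒮.iter (m*(-k)) '' D) (𝒮.iter (m*(-k-1)) '' D)) = 0 := by
          rw [key, ← iter_image_symmDiff, measure_iter_image]
          · exact H' D hD
          · exact (hD.symmDiff hB)
        refine le_antisymm ?_ zero_le
        calc 𝒮.μ (symmDiff D (𝒮.iter (m*(-k-1)) '' D)) ≤ _ := measure_mono htri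
          _ ≤ 𝒮.μ (symmDiff D (𝒮.iter (m*(-k)) '' D)) +
              𝒮.μ (symmDiff (𝒮.iter (m*(-k)) '' D) (𝒮.iter (m*(-k-1)) '' D)) := measure_union_le _ _
          _ ≤ 0 := by rw [ih D hD, h2, add_zero]
  -- derive contradiction with weak mixing
  obtain ⟨D0, hD0, hpos, hlt⟩ := hnt
  have hWM := hwm D0 D0 hD0 hD0
  set d := m.natAbs with hd
  have hd0 : 0 < d := Int.natAbs_pos.mpr hm
  have hne : 𝒮.μ D0 ≠ ⊤ := measure_ne_top _ _
  set a := (𝒮.μ D0).toReal with ha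
  have ha0 : 0 < a := ENNReal.toReal_pos hpos.ne' hne
  have ha1 : a < 1 := by
    have h1 := (ENNReal.toReal_lt_toReal hne (by norm_num : (1:ENNReal) ≠ ⊤)).mpr hlt
    simpa using h1
  set δ := a - a * a with hδ
  have hδ0 : 0 < δ := by nlinarith
  have hterm : ∀ k : ℕ, 𝒮.μ (D0 ∩ 𝒮.iter (-((d * k : ℕ) : ℤ)) '' D0) = 𝒮.μ D0 := by
    intro k
    have hdvd : m ∣ (-((d * k : ℕ) : ℤ)) := by
      have h1 : ((d : ℤ)) ∣ ((d * k : ℕ) : ℤ) := by exact_mod_cast Dvd.intro k rfl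
      exact dvd_neg.mpr ((Int.natAbs_dvd).mp h1)
    obtain ⟨t, ht⟩ := hdvd
    apply measure_inter_of_symmDiff_null
    rw [ht]
    exact Hmul t D0 hD0
  have hfk : ∀ k : ℕ,
      |(𝒮.μ (D0 ∩ 𝒮.iter (-((d * k : ℕ) : ℤ)) '' D0)).toReal - a * a| = δ := by
    intro k
    rw [hterm k, ← ha, ← hδ]
    exact abs_of_pos hδ0
  have hsum : ∀ M : ℕ, (M : ℝ) * δ ≤
      ∑ n ∈ Finset.range (d * M),
        |(𝒮.μ (D0 ∩ 𝒮.iter (-(n : ℤ)) '' D0)).toReal - a * a| := by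
    intro M
    have himg : (Finset.range M).image (fun k => d * k) ⊆ Finset.range (d * M) := by
      intro n hn
      simp only [Finset.mem_image, Finset.mem_range] at hn ⊢
      obtain ⟨k, hk, rfl⟩ := hn
      exact (Nat.mul_lt_mul_left hd0).mpr hk
    calc (M : ℝ) * δ
        = ∑ k ∈ Finset.range M,
            |(𝒮.μ (D0 ∩ 𝒮.iter (-((d * k : ℕ) : ℤ)) '' D0)).toReal - a * a| := by
          rw [Finset.sum_congr rfl (fun k _ => hfk k)]
          simp [mul_comm]
      _ = ∑ n ∈ (Finset.range M).image (fun k => d * k),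
            |(𝒮.μ (D0 ∩ 𝒮.iter (-(n : ℤ)) '' D0)).toReal - a * a| := by
          rw [Finset.sum_image (fun x _ y _ h => Nat.eq_of_mul_eq_mul_left hd0 h)]
      _ ≤ _ := Finset.sum_le_sum_of_subset_of_nonneg himg (fun i _ _ => abs_nonneg _)
  have hmulT : Tendsto (fun M : ℕ => d * M) atTop atTop :=
    tendsto_atTop_mono (fun M => Nat.le_mul_of_pos_left M hd0) tendsto_id
  have htend := hWM.comp hmulT
  have hδd : 0 < δ / d := by positivity
  have hev := htend.eventually (gt_mem_nhds hδd)
  obtain ⟨M, hM1, hMev⟩ := ((eventually_ge_atTop 1).and hev).exists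
  have hdM : (0 : ℝ) < (d * M : ℕ) := by
    have : 0 < d * M := Nat.mul_pos hd0 hM1
    exact_mod_cast this
  have hlow : δ / d ≤
      (∑ n ∈ Finset.range (d * M),
        |(𝒮.μ (D0 ∩ 𝒮.iter (-(n : ℤ)) '' D0)).toReal - a * a|) / (d * M : ℕ) := by
    have h1 := hsum M
    rw [le_div_iff₀ hdM]
    calc δ / d * ((d * M : ℕ) : ℝ) = (M : ℝ) * δ := by
          push_cast
          field_simp
      _ ≤ _ := h1
  exact absurd hMev (not_lt.mpr hlow)

lemma exists_separated_set (𝒮 : MPSystem) (hnt : IsNontrivialSystem 𝒮)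
    (hwm : IsWeakMixing 𝒮) (m : ℤ) (hm : m ≠ 0) :
    ∃ C : Set 𝒮.X, MeasurableSet C ∧ 0 < 𝒮.μ C ∧ C ∩ 𝒮.iter m '' C = ∅ := by
  haveI := 𝒮.prob
  obtain ⟨D, hD, hpos⟩ := exists_symmDiff_pos 𝒮 hnt hwm m hm
  set B := 𝒮.iter m '' D with hBdef
  have hB : MeasurableSet B := 𝒮.measurableSet_iter_image m hD
  have hμB : 𝒮.μ B = 𝒮.μ D := 𝒮.measure_iter_image m hD
  refine ⟨D \ B, hD.diff hB, ?_, ?_⟩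
  · by_contra hz
    push_neg at hz
    have h1 : 𝒮.μ (D \ B) = 0 := le_antisymm hz zero_le
    have h2 : 𝒮.μ (D ∩ B) = 𝒮.μ D := by
      have := measure_inter_add_diff D hB (μ := 𝒮.μ)
      rw [h1, add_zero] at this
      exact this
    have h3 : 𝒮.μ (B ∩ D) + 𝒮.μ (B \ D) = 𝒮.μ B := measure_inter_add_diff B hD
    have h4 : 𝒮.μ (B ∩ D) = 𝒮.μ B := by rw [Set.inter_comm, h2, hμB]
    have h5 : 𝒮.μ (B \ D) = 0 := by
      rw [h4] at h3
      have hfin : 𝒮.μ B ≠ ⊤ := measure_ne_top _ _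
      nth_rewrite 2 [← add_zero (𝒮.μ B)] at h3
      exact (ENNReal.add_right_inj hfin).mp h3
    have h6 : 𝒮.μ (symmDiff D B) = 0 := by
      rw [Set.symmDiff_def]
      refine le_antisymm ?_ zero_le
      calc 𝒮.μ (D \ B ∪ B \ D) ≤ 𝒮.μ (D \ B) + 𝒮.μ (B \ D) := measure_union_le _ _
        _ = 0 := by rw [h1, h5, add_zero]
    exact absurd h6 hpos.ne'
  · have hsub : 𝒮.iter m '' (D \ B) ⊆ B := Set.image_mono (Set.diff_subset)
    rw [Set.eq_empty_iff_forall_notMem]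
    rintro x ⟨⟨_, hxB⟩, hx2⟩
    exact hxB (hsub hx2)

/-- If `𝒮` is a nontrivial weak mixing system, `S` is a set of rigidity for `𝒮`, and
`m ≠ 0`, then `S + m` is not a set of strong recurrence for `𝒮`. -/
theorem statement9 (𝒮 : MPSystem) (hnt : IsNontrivialSystem 𝒮) (hwm : IsWeakMixing 𝒮)
    (S : Set ℤ) (hS : IsRigiditySetFor S 𝒮) (m : ℤ) (hm : m ≠ 0) :
    ¬ IsStrongRecurrenceSetFor (zTranslate S m) 𝒮 := by
  haveI := 𝒮.prob
  intro hrec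
  obtain ⟨C, hC, hCpos, hCsep⟩ := exists_separated_set 𝒮 hnt hwm m hm
  obtain ⟨c, hc, hinf⟩ := hrec C hC hCpos
  have hF : {s ∈ S | c < (𝒮.μ (symmDiff C (𝒮.iter s '' C))).toReal}.Finite :=
    hS.2 C hC c hc
  -- the bad set is contained in the image of the finite set
  have hsub : {n ∈ zTranslate S m | c < (𝒮.μ (C ∩ 𝒮.iter n '' C)).toReal} ⊆
      (fun s => s + m) '' {s ∈ S | c < (𝒮.μ (symmDiff C (𝒮.iter s '' C))).toReal} := by
    rintro n ⟨hn, hcn⟩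
    obtain ⟨s, hsS, rfl⟩ := hn
    refine ⟨s, ⟨hsS, ?_⟩, rfl⟩
    -- key inequality : μ (C ∩ iter (s+m) C) ≤ μ (C Δ iter s C)
    have hkey : 𝒮.μ (C ∩ 𝒮.iter (s + m) '' C) ≤ 𝒮.μ (symmDiff C (𝒮.iter s '' C)) := by
      have hincl : C ∩ 𝒮.iter (s + m) '' C ⊆
          symmDiff (𝒮.iter (s + m) '' C) (𝒮.iter m '' C) := by
        intro x ⟨hx1, hx2⟩
        rw [Set.mem_symmDiff]
        left
        refine ⟨hx2, fun hxm => ?_⟩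
        have : x ∈ C ∩ 𝒮.iter m '' C := ⟨hx1, hxm⟩
        rw [hCsep] at this
        exact this
      have heq : symmDiff (𝒮.iter (s + m) '' C) (𝒮.iter m '' C) =
          𝒮.iter m '' (symmDiff (𝒮.iter s '' C) C) := by
        rw [iter_image_symmDiff, show s + m = m + s from add_comm s m,
          𝒮.iter_image_add m s]
      calc 𝒮.μ (C ∩ 𝒮.iter (s + m) '' C)
          ≤ 𝒮.μ (symmDiff (𝒮.iter (s + m) '' C) (𝒮.iter m '' C)) := measure_mono hincl
        _ = 𝒮.μ (symmDiff (𝒮.iter s '' C) C) := by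
            rw [heq, 𝒮.measure_iter_image m ((𝒮.measurableSet_iter_image s hC).symmDiff hC)]
        _ = 𝒮.μ (symmDiff C (𝒮.iter s '' C)) := by rw [symmDiff_comm]
    have htoReal : (𝒮.μ (C ∩ 𝒮.iter (s + m) '' C)).toReal ≤
        (𝒮.μ (symmDiff C (𝒮.iter s '' C))).toReal :=
      ENNReal.toReal_mono (measure_ne_top _ _) hkey
    exact lt_of_lt_of_le hcn htoReal
  exact absurd (hinf.mono hsub) (hF.image _).not_infinite
end
end

section
/- Let (X,T) be a uniquely ergodic topological system on a totally disconnected compact metric space X whose unique T-invariant Borel probability measure μ is continuous (atomless). Then for every ε > 0 there exists a clopen set D ⊆ X with μ(D) > 1/2 − ε and D ∩ TD = ∅. -/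
noncomputable section

open MeasureTheory Set Function
open scoped ENNReal NNReal

namespace Statement11Aux

variable {X : Type} [MetricSpace X] [CompactSpace X]
    [TotallyDisconnectedSpace X] [MeasurableSpace X] [BorelSpace X]

/-- Unique ergodicity with an atomless invariant measure forces aperiodicity. -/
lemma aperiodic (T : X ≃ₜ X) (μ : Measure X) (hprob : IsProbabilityMeasure μ)
    (huniq : ∀ ν : Measure X, IsProbabilityMeasure ν → MeasurePreserving T ν ν → ν = μ)
    (hcont : ∀ x : X, μ {x} = 0) (x : X) (p : ℕ) (hp : 0 < p) :
    (⇑T)^[p] x ≠ x := by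
  intro hfix
  have hTm : Measurable (⇑T) := T.continuous.measurable
  have hp0 : (p : ℝ≥0∞) ≠ 0 := by exact_mod_cast Nat.cast_ne_zero.2 hp.ne'
  have hptop : (p : ℝ≥0∞) ≠ ⊤ := ENNReal.natCast_ne_top p
  set ν : Measure X := (p : ℝ≥0∞)⁻¹ • ∑ i ∈ Finset.range p, Measure.dirac ((⇑T)^[i] x) with hν
  have hνapp : ∀ s : Set X, MeasurableSet s →
      ν s = (p : ℝ≥0∞)⁻¹ *
        ∑ i ∈ Finset.range p, s.indicator (1 : X → ℝ≥0∞) ((⇑T)^[i] x) := by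
    intro s hs
    simp only [hν, Measure.smul_apply, Measure.finset_sum_apply, smul_eq_mul]
    congr 1
    exact Finset.sum_congr rfl fun i _ => Measure.dirac_apply' _ hs
  have hνprob : IsProbabilityMeasure ν := by
    constructor
    rw [hνapp univ MeasurableSet.univ]
    have : ∀ i ∈ Finset.range p, (univ : Set X).indicator (1 : X → ℝ≥0∞) ((⇑T)^[i] x) = 1 := by
      intro i _; simp
    rw [Finset.sum_congr rfl this, Finset.sum_const, Finset.card_range, nsmul_eq_mul, mul_one]
    exact ENNReal.inv_mul_cancel hp0 hptop
  have hνinv : MeasurePreserving (⇑T) ν ν := by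
    refine ⟨hTm, ?_⟩
    ext s hs
    rw [Measure.map_apply hTm hs, hνapp _ (hTm hs), hνapp _ hs]
    congr 1
    set c : ℕ → ℝ≥0∞ := fun j => s.indicator (1 : X → ℝ≥0∞) ((⇑T)^[j] x) with hc
    have hterm : ∀ i ∈ Finset.range p,
        (⇑T ⁻¹' s).indicator (1 : X → ℝ≥0∞) ((⇑T)^[i] x) = c (i + 1) := by
      intro i _
      simp only [hc, Function.iterate_succ_apply']
      by_cases h : T ((⇑T)^[i] x) ∈ s <;>
        simp [indicator_apply, mem_preimage, h]
    rw [Finset.sum_congr rfl hterm]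
    -- ∑_{i<p} c (i+1) = ∑_{i<p} c i, using c p = c 0
    have hcp : c p = c 0 := by simp [hc, hfix]
    have h1 := Finset.sum_range_succ' c p
    have h2 := Finset.sum_range_succ c p
    have hne : c 0 ≠ ⊤ := by
      have hco : c 0 = s.indicator 1 x := by simp [hc]
      rw [hco]
      by_cases h : x ∈ s
      · rw [Set.indicator_of_mem h]; simp
      · rw [Set.indicator_of_notMem h]; simp
    have : c 0 + ∑ i ∈ Finset.range p, c (i + 1) = c 0 + ∑ i ∈ Finset.range p, c i := by
      rw [add_comm (c 0), ← h1, h2, hcp, add_comm]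
    exact (ENNReal.add_right_inj hne).1 this
  have hνμ : ν = μ := huniq ν hνprob hνinv
  have hsing : ν {x} = 0 := by rw [hνμ]; exact hcont x
  rw [hνapp {x} (measurableSet_singleton x)] at hsing
  have hterm0 : ({x} : Set X).indicator (1 : X → ℝ≥0∞) ((⇑T)^[0] x) = 1 := by simp
  have hge : (1 : ℝ≥0∞) ≤
      ∑ i ∈ Finset.range p, ({x} : Set X).indicator (1 : X → ℝ≥0∞) ((⇑T)^[i] x) := by
    rw [← hterm0]
    exact Finset.single_le_sum
      (f := fun i => ({x} : Set X).indicator (1 : X → ℝ≥0∞) ((⇑T)^[i] x))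
      (fun i _ => zero_le) (Finset.mem_range.2 hp)
  have : (p : ℝ≥0∞)⁻¹ *
      ∑ i ∈ Finset.range p, ({x} : Set X).indicator (1 : X → ℝ≥0∞) ((⇑T)^[i] x) ≠ 0 := by
    apply mul_ne_zero (ENNReal.inv_ne_zero.2 hptop)
    intro h0
    rw [h0] at hge
    exact (not_le.2 zero_lt_one) hge
  exact this hsing

/-- Greedy construction of a marker set from a list of good clopen sets. -/
lemma greedy (T : X ≃ₜ X) (n : ℕ) (l : List (Set X))
    (hl : ∀ V ∈ l, IsClopen V ∧ ∀ i, 1 ≤ i → i ≤ n → ∀ y ∈ V, (⇑T)^[i] y ∉ V) :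
    ∃ F : Set X, IsClopen F ∧ (∀ i, 1 ≤ i → i ≤ n → ∀ y ∈ F, (⇑T)^[i] y ∉ F) ∧
      ∀ V ∈ l, ∀ y ∈ V, ∃ i ≤ n, (⇑T)^[i] y ∈ F ∨ (⇑T.symm)^[i] y ∈ F := by
  have hgf : ∀ (i : ℕ) (y : X), (⇑T.symm)^[i] ((⇑T)^[i] y) = y := fun i y =>
    (Function.LeftInverse.iterate T.symm_apply_apply i) y
  induction l with
  | nil => exact ⟨∅, isClopen_empty, fun i _ _ y hy => absurd hy (notMem_empty y), by simp⟩
  | cons V l ih =>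
    obtain ⟨F, hFc, hFd, hFcov⟩ := ih (fun W hW => hl W (List.mem_cons_of_mem _ hW))
    obtain ⟨hVc, hVd⟩ := hl V List.mem_cons_self
    set E : Set X := ⋃ i ∈ Finset.range (n + 1),
      ((⇑T)^[i] ⁻¹' F ∪ (⇑T.symm)^[i] ⁻¹' F) with hE
    have hmemE : ∀ y : X, y ∈ E ↔ ∃ i ≤ n, (⇑T)^[i] y ∈ F ∨ (⇑T.symm)^[i] y ∈ F := by
      intro y
      simp only [hE, mem_iUnion, Finset.mem_range, mem_union, mem_preimage, Nat.lt_succ_iff,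
        exists_prop]
    have hEc : IsClopen E := by
      apply isClopen_biUnion_finset
      intro i _
      exact (hFc.preimage (T.continuous.iterate i)).union
        (hFc.preimage (T.symm.continuous.iterate i))
    refine ⟨F ∪ (V \ E), hFc.union (hVc.diff hEc), ?_, ?_⟩
    · intro i h1 h2 y hy hfy
      rcases hy with hyF | hyV
      · rcases hfy with hfF | hfV
        · exact hFd i h1 h2 y hyF hfF
        · exact hfV.2 ((hmemE _).2 ⟨i, h2, Or.inr (by rw [hgf i y]; exact hyF)⟩)
      · rcases hfy with hfF | hfV
        · exact hyV.2 ((hmemE _).2 ⟨i, h2, Or.inl hfF⟩)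
        · exact hVd i h1 h2 y hyV.1 hfV.1
    · intro W hW y hyW
      rcases List.mem_cons.1 hW with rfl | hWl
      · by_cases hyE : y ∈ E
        · obtain ⟨i, hi, hcase⟩ := (hmemE y).1 hyE
          exact ⟨i, hi, hcase.imp (fun h => Or.inl h) (fun h => Or.inl h)⟩
        · exact ⟨0, Nat.zero_le n, Or.inl (by
            simp only [Function.iterate_zero, id_eq]
            exact Or.inr ⟨hyW, hyE⟩)⟩
      · obtain ⟨i, hi, hcase⟩ := hFcov W hWl y hyW
        exact ⟨i, hi, hcase.imp (fun h => Or.inl h) (fun h => Or.inl h)⟩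

/-- Helper: splitting a sum over `range (2*m)` into even/odd pairs. -/
lemma sum_pairs (m : ℕ) (c : ℕ → ℝ) :
    ∑ t ∈ Finset.range (2 * m), c t = ∑ k ∈ Finset.range m, (c (2 * k) + c (2 * k + 1)) := by
  induction m with
  | zero => simp
  | succ m ih =>
    have h2 : 2 * (m + 1) = (2 * m + 1) + 1 := by ring
    rw [h2, Finset.sum_range_succ, Finset.sum_range_succ, ih, Finset.sum_range_succ]
    ring

end Statement11Aux

open Statement11Aux

/-- If `(X,T)` is a uniquely ergodic topological system on a totally disconnected
compact metric space whose unique invariant Borel probability measure `μ` is atomless,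
then for every `ε > 0` there is a clopen set `D` with `μ(D) > 1/2 - ε` and
`D ∩ TD = ∅`. -/
theorem statement11 (X : Type) [MetricSpace X] [CompactSpace X]
    [TotallyDisconnectedSpace X] [MeasurableSpace X] [BorelSpace X]
    (T : X ≃ₜ X) (μ : Measure X) (hprob : IsProbabilityMeasure μ)
    (hinv : MeasurePreserving T μ μ)
    (huniq : ∀ ν : Measure X, IsProbabilityMeasure ν → MeasurePreserving T ν ν → ν = μ)
    (hcont : ∀ x : X, μ {x} = 0)
    (ε : ℝ) (hε : 0 < ε) :
    ∃ D : Set X, IsClopen D ∧ 1 / 2 - ε < (μ D).toReal ∧ D ∩ T '' D = ∅ := by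
  classical
  have hTm : Measurable (⇑T) := T.continuous.measurable
  have hgm : Measurable (⇑T.symm) := T.symm.continuous.measurable
  have hsymm : MeasurePreserving (⇑T.symm) μ μ := by
    have h1 : MeasurePreserving (⇑T.toMeasurableEquiv) μ μ := by
      rw [Homeomorph.toMeasurableEquiv_coe]; exact hinv
    have h2 := h1.symm T.toMeasurableEquiv
    have h3 : ⇑T.toMeasurableEquiv.symm = ⇑T.symm := rfl
    rwa [h3] at h2
  have hgf : ∀ (i : ℕ) (y : X), (⇑T.symm)^[i] ((⇑T)^[i] y) = y := fun i y =>
    (Function.LeftInverse.iterate T.symm_apply_apply i) y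
  have hfg : ∀ (i : ℕ) (y : X), (⇑T)^[i] ((⇑T.symm)^[i] y) = y := fun i y =>
    (Function.LeftInverse.iterate T.apply_symm_apply i) y
  have hap : ∀ (x : X) (p : ℕ), 0 < p → (⇑T)^[p] x ≠ x :=
    fun x p hp => aperiodic T μ hprob huniq hcont x p hp
  -- choose n
  obtain ⟨n, hn⟩ := exists_nat_gt (1 / (2 * ε))
  -- Step B : local separation
  have hsep : ∀ x : X, ∃ V : Set X, IsClopen V ∧ x ∈ V ∧
      ∀ i, 1 ≤ i → i ≤ n → ∀ y ∈ V, (⇑T)^[i] y ∉ V := by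
    intro x
    rcases Nat.eq_zero_or_pos n with rfl | hnpos
    · exact ⟨univ, isClopen_univ, mem_univ x, fun i h1 h0 => absurd (le_trans h1 h0) (by omega)⟩
    have hne : (Finset.Icc 1 n).Nonempty := ⟨1, Finset.mem_Icc.2 ⟨le_refl 1, hnpos⟩⟩
    set δ : ℝ := (Finset.Icc 1 n).inf' hne (fun i => dist ((⇑T)^[i] x) x) with hδ
    have hδpos : 0 < δ := by
      rw [hδ, Finset.lt_inf'_iff]
      intro i hi
      rw [dist_pos]
      exact hap x i (Finset.mem_Icc.1 hi).1
    have hδle : ∀ i ∈ Finset.Icc 1 n, δ ≤ dist ((⇑T)^[i] x) x := fun i hi =>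
      Finset.inf'_le _ hi
    -- continuity radii
    have hcontI : ∀ i : ℕ, ∃ r > 0, ∀ y : X, dist y x < r →
        dist ((⇑T)^[i] y) ((⇑T)^[i] x) < δ / 3 := by
      intro i
      have := (Metric.continuous_iff.1 (T.continuous.iterate i)) x (δ / 3) (by linarith)
      exact this
    choose r hr0 hr using hcontI
    set R : ℝ := min (δ / 3) ((Finset.Icc 1 n).inf' hne r) with hR
    have hRpos : 0 < R := by
      rw [hR, lt_min_iff]
      refine ⟨by linarith, ?_⟩
      rw [Finset.lt_inf'_iff]
      exact fun i _ => hr0 i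
    have hRr : ∀ i ∈ Finset.Icc 1 n, R ≤ r i := fun i hi =>
      le_trans (min_le_right _ _) (Finset.inf'_le _ hi)
    have hkey : ∀ i, 1 ≤ i → i ≤ n → ∀ y z : X,
        dist y x < R → dist z x < R → (⇑T)^[i] y ≠ z := by
      intro i h1 h2 y z hy hz heq
      have hiI : i ∈ Finset.Icc 1 n := Finset.mem_Icc.2 ⟨h1, h2⟩
      have h3 : dist ((⇑T)^[i] y) ((⇑T)^[i] x) < δ / 3 :=
        hr i y (lt_of_lt_of_le hy (hRr i hiI))
      have h4 : δ ≤ dist ((⇑T)^[i] x) x := hδle i hiI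
      have h5 : dist z x < δ / 3 := lt_of_lt_of_le hz (min_le_left _ _)
      have h6 : dist ((⇑T)^[i] x) x ≤
          dist ((⇑T)^[i] x) ((⇑T)^[i] y) + dist ((⇑T)^[i] y) x := dist_triangle _ _ _
      rw [heq] at h3
      rw [dist_comm ((⇑T)^[i] x) ((⇑T)^[i] y), heq] at h6
      linarith
    obtain ⟨V, hVc, hVx, hVsub⟩ :=
      compact_exists_isClopen_in_isOpen (U := Metric.ball x R) Metric.isOpen_ball
        (Metric.mem_ball_self hRpos : x ∈ Metric.ball x R)
    refine ⟨V, hVc, hVx, ?_⟩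
    intro i h1 h2 y hy hfy
    exact hkey i h1 h2 y ((⇑T)^[i] y) (Metric.mem_ball.1 (hVsub hy))
      (Metric.mem_ball.1 (hVsub hfy)) rfl
  -- compactness: finite subcover
  choose V hVc hVx hVd using hsep
  obtain ⟨s, hs⟩ := (isCompact_univ (X := X)).elim_finite_subcover V (fun x => (hVc x).2)
    (fun x _ => mem_iUnion.2 ⟨x, hVx x⟩)
  -- greedy marker set
  obtain ⟨F, hFc, hFd, hFcov⟩ := greedy T n (s.toList.map V) (by
    intro W hW
    obtain ⟨c, _, rfl⟩ := List.mem_map.1 hW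
    exact ⟨hVc c, hVd c⟩)
  have hFm : MeasurableSet F := hFc.2.measurableSet
  -- every forward orbit hits F within 2n steps
  have hhit : ∀ x : X, ∃ t, t ≤ 2 * n ∧ (⇑T)^[t] x ∈ F := by
    intro x
    obtain ⟨c, hcs, hcV⟩ : ∃ c ∈ s, (⇑T)^[n] x ∈ V c := by
      have := hs (mem_univ ((⇑T)^[n] x))
      simpa using this
    obtain ⟨i, hi, hcase⟩ := hFcov (V c)
      (List.mem_map.2 ⟨c, Finset.mem_toList.2 hcs, rfl⟩) _ hcV
    rcases hcase with h | h
    · refine ⟨i + n, by omega, ?_⟩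
      rw [Function.iterate_add_apply]
      exact h
    · refine ⟨n - i, by omega, ?_⟩
      have hsplit : (⇑T)^[n] x = (⇑T)^[i] ((⇑T)^[n - i] x) := by
        rw [← Function.iterate_add_apply]
        congr 1
        omega
      rw [hsplit, hgf i] at h
      exact h
  have hex : ∀ x : X, ∃ t, (⇑T)^[t] x ∈ F := fun x => (hhit x).imp fun t ht => ht.2
  -- hitting-time level sets
  set H : ℕ → Set X := fun t => {x | (⇑T)^[t] x ∈ F ∧ ∀ u < t, (⇑T)^[u] x ∉ F} with hH
  have hHc : ∀ t, IsClopen (H t) := by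
    intro t
    have heq : H t = ((⇑T)^[t] ⁻¹' F) ∩ ⋂ u ∈ Finset.range t, ((⇑T)^[u] ⁻¹' F)ᶜ := by
      ext x
      simp only [hH, mem_setOf_eq, mem_inter_iff, mem_preimage, mem_iInter, mem_compl_iff,
        Finset.mem_range]
    rw [heq]
    exact (hFc.preimage (T.continuous.iterate t)).inter
      (isClopen_biInter_finset fun u _ => (hFc.preimage (T.continuous.iterate u)).compl)
  have hHm : ∀ t, MeasurableSet (H t) := fun t => (hHc t).2.measurableSet
  have hHd : ∀ t t', t < t' → ∀ x, x ∈ H t → x ∈ H t' → False :=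
    fun t t' h x hx hx' => hx'.2 t h hx.1
  have hHu : ∀ x : X, ∃ t, t ≤ 2 * n ∧ x ∈ H t := by
    intro x
    obtain ⟨t0, ht0, ht0F⟩ := hhit x
    refine ⟨Nat.find (hex x), le_trans (Nat.find_min' (hex x) ht0F) ht0,
      Nat.find_spec (hex x), fun u hu => Nat.find_min (hex x) hu⟩
  -- recursion for level sets
  have hHrec : ∀ t, H (t + 1) = ⇑T ⁻¹' (H t) \ F := by
    intro t
    ext x
    simp only [hH, mem_setOf_eq, mem_diff, mem_preimage]
    constructor
    · rintro ⟨h1, h2⟩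
      refine ⟨⟨?_, ?_⟩, ?_⟩
      · rw [← Function.iterate_succ_apply]; exact h1
      · intro u hu; rw [← Function.iterate_succ_apply]; exact h2 (u + 1) (by omega)
      · simpa using h2 0 (by omega)
    · rintro ⟨⟨h1, h2⟩, h3⟩
      refine ⟨by rw [Function.iterate_succ_apply]; exact h1, ?_⟩
      intro u hu
      cases u with
      | zero => simpa using h3
      | succ u => rw [Function.iterate_succ_apply]; exact h2 u (by omega)
  -- measure recursion
  have hrecμ : ∀ t, μ (H t) = μ (H (t + 1)) + μ (⇑T ⁻¹' (H t) ∩ F) := by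
    intro t
    have h1 : μ (⇑T ⁻¹' (H t)) = μ (H t) :=
      hinv.measure_preimage (hHm t).nullMeasurableSet
    calc μ (H t) = μ (⇑T ⁻¹' (H t)) := h1.symm
      _ = μ ((⇑T ⁻¹' (H t) \ F) ∪ (⇑T ⁻¹' (H t) ∩ F)) := by rw [diff_union_inter]
      _ = μ (⇑T ⁻¹' (H t) \ F) + μ (⇑T ⁻¹' (H t) ∩ F) := by
          apply measure_union _ ((hTm (hHm t)).inter hFm)
          exact disjoint_left.mpr fun x hx hx' => hx.2 hx'.2
      _ = μ (H (t + 1)) + μ (⇑T ⁻¹' (H t) ∩ F) := by rw [← hHrec]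
  set a : ℕ → ℝ := fun t => (μ (H t)).toReal with ha'
  set b : ℕ → ℝ := fun t => (μ (⇑T ⁻¹' (H t) ∩ F)).toReal with hb'
  have hab : ∀ t, a t = a (t + 1) + b t := by
    intro t
    rw [ha', hb']
    simp only
    rw [hrecμ t, ENNReal.toReal_add (measure_ne_top μ _) (measure_ne_top μ _)]
  have hbnn : ∀ t, 0 ≤ b t := fun t => ENNReal.toReal_nonneg
  -- total sum is 1
  have hcoverU : (univ : Set X) = ⋃ t ∈ Finset.range (2 * n + 2), H t := by
    apply Subset.antisymm
    · intro x _
      obtain ⟨t, ht, hxt⟩ := hHu x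
      exact mem_biUnion (Finset.mem_range.2 (by omega)) hxt
    · exact subset_univ _
  have hHpd : (↑(Finset.range (2 * n + 2)) : Set ℕ).PairwiseDisjoint H := by
    intro t _ t' _ hne
    apply Set.disjoint_left.mpr
    intro x hx hx'
    rcases lt_or_gt_of_ne hne with h | h
    · exact hHd t t' h x hx hx'
    · exact hHd t' t h x hx' hx
  have hsum1 : ∑ t ∈ Finset.range (2 * n + 2), a t = 1 := by
    have := measure_biUnion_finset (μ := μ) hHpd (fun t _ => hHm t)
    rw [← hcoverU] at this
    have h1 : (μ (univ : Set X)).toReal = 1 := by simp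
    rw [this] at h1
    rw [← h1, ENNReal.toReal_sum (fun t _ => measure_ne_top μ _)]
  have hsum2 : ∑ k ∈ Finset.range (n + 1), (a (2 * k) + a (2 * k + 1)) = 1 := by
    rw [← sum_pairs (n + 1) a]
    have : 2 * (n + 1) = 2 * n + 2 := by ring
    rw [this, hsum1]
  -- define D
  set D : Set X := ⋃ k ∈ Finset.range (n + 1), H (2 * k + 1) with hD
  have hDc : IsClopen D := isClopen_biUnion_finset fun k _ => hHc (2 * k + 1)
  have hDμ : (μ D).toReal = ∑ k ∈ Finset.range (n + 1), a (2 * k + 1) := by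
    have hpd : (↑(Finset.range (n + 1)) : Set ℕ).PairwiseDisjoint
        (fun k => H (2 * k + 1)) := by
      intro k _ k' _ hne
      apply Set.disjoint_left.mpr
      intro x hx hx'
      rcases lt_or_gt_of_ne hne with h | h
      · exact hHd (2 * k + 1) (2 * k' + 1) (by omega) x hx hx'
      · exact hHd (2 * k' + 1) (2 * k + 1) (by omega) x hx' hx
    rw [hD, measure_biUnion_finset hpd (fun k _ => hHm _),
      ENNReal.toReal_sum (fun k _ => measure_ne_top μ _)]
  -- bound on sum of b (2k)
  have hBsum : ∑ k ∈ Finset.range (n + 1), b (2 * k) ≤ (μ F).toReal := by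
    have hpd : (↑(Finset.range (n + 1)) : Set ℕ).PairwiseDisjoint
        (fun k => ⇑T ⁻¹' (H (2 * k)) ∩ F) := by
      intro k _ k' _ hne
      apply Set.disjoint_left.mpr
      intro x hx hx'
      rcases lt_or_gt_of_ne hne with h | h
      · exact hHd (2 * k) (2 * k') (by omega) (T x) hx.1 hx'.1
      · exact hHd (2 * k') (2 * k) (by omega) (T x) hx'.1 hx.1
    have h1 : ∑ k ∈ Finset.range (n + 1), μ (⇑T ⁻¹' (H (2 * k)) ∩ F) ≤ μ F := by
      rw [← measure_biUnion_finset hpd (fun k _ => (hTm (hHm _)).inter hFm)]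
      exact measure_mono (iUnion₂_subset fun k _ => inter_subset_right)
    calc ∑ k ∈ Finset.range (n + 1), b (2 * k)
        = (∑ k ∈ Finset.range (n + 1), μ (⇑T ⁻¹' (H (2 * k)) ∩ F)).toReal := by
          rw [ENNReal.toReal_sum (fun k _ => measure_ne_top μ _)]
      _ ≤ (μ F).toReal := ENNReal.toReal_mono (measure_ne_top μ _) h1
  -- bound on μ F
  have hFμ : ((n : ℝ) + 1) * (μ F).toReal ≤ 1 := by
    have hpd : (↑(Finset.range (n + 1)) : Set ℕ).PairwiseDisjoint
        (fun i => (⇑T.symm)^[i] ⁻¹' F) := by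
      have key : ∀ i j, i < j → j ≤ n →
          Disjoint ((⇑T.symm)^[i] ⁻¹' F) ((⇑T.symm)^[j] ⁻¹' F) := by
        intro i j hij hj
        apply Set.disjoint_left.mpr
        intro x hxi hxj
        have hw : (⇑T)^[j - i] ((⇑T.symm)^[j] x) = (⇑T.symm)^[i] x := by
          have hsplit : (⇑T.symm)^[j] x = (⇑T.symm)^[j - i] ((⇑T.symm)^[i] x) := by
            rw [← Function.iterate_add_apply]
            congr 1
            omega
          rw [hsplit, hfg (j - i)]
        exact hFd (j - i) (by omega) (by omega) _ hxj (by rw [hw]; exact hxi)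
      intro i hi j hj hne
      simp only [Finset.coe_range, mem_Iio] at hi hj
      rcases lt_or_gt_of_ne hne with h | h
      · exact key i j h (by omega)
      · exact (key j i h (by omega)).symm
    have hmeas : ∀ i : ℕ, μ ((⇑T.symm)^[i] ⁻¹' F) = μ F := fun i =>
      (hsymm.iterate i).measure_preimage hFm.nullMeasurableSet
    have h1 : ∑ i ∈ Finset.range (n + 1), μ ((⇑T.symm)^[i] ⁻¹' F) ≤ 1 := by
      rw [← measure_biUnion_finset hpd (fun i _ => (hgm.iterate i) hFm)]
      calc μ (⋃ i ∈ Finset.range (n + 1), (⇑T.symm)^[i] ⁻¹' F) ≤ μ univ :=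
            measure_mono (subset_univ _)
        _ = 1 := measure_univ
    have h2 : ∑ i ∈ Finset.range (n + 1), μ ((⇑T.symm)^[i] ⁻¹' F) = (n + 1 : ℕ) * μ F := by
      rw [Finset.sum_congr rfl (fun i _ => hmeas i), Finset.sum_const, Finset.card_range,
        nsmul_eq_mul]
    rw [h2] at h1
    have h3 : ((n + 1 : ℕ) * μ F).toReal ≤ (1 : ℝ≥0∞).toReal :=
      ENNReal.toReal_mono (by simp) h1
    rw [ENNReal.toReal_mul, ENNReal.toReal_natCast] at h3
    simpa using h3
  -- arithmetic conclusion
  have h2S : 2 * (∑ k ∈ Finset.range (n + 1), a (2 * k + 1)) +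
      ∑ k ∈ Finset.range (n + 1), b (2 * k) = 1 := by
    have : ∀ k ∈ Finset.range (n + 1),
        a (2 * k) + a (2 * k + 1) = 2 * a (2 * k + 1) + b (2 * k) := by
      intro k _
      have := hab (2 * k)
      linarith [this]
    rw [Finset.sum_congr rfl this] at hsum2
    rw [Finset.sum_add_distrib, ← Finset.mul_sum] at hsum2
    linarith [hsum2]
  have hεn : (μ F).toReal < 2 * ε := by
    have hn1 : (0 : ℝ) < (n : ℝ) + 1 := by positivity
    have h1 : 1 < (n : ℝ) * (2 * ε) := (div_lt_iff₀ (by positivity)).1 hn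
    nlinarith [ENNReal.toReal_nonneg (a := μ F)]
  have hfinal : 1 / 2 - ε < (μ D).toReal := by
    rw [hDμ]
    linarith [h2S, hBsum, hεn]
  -- D ∩ T '' D = ∅
  have hDT : D ∩ T '' D = ∅ := by
    apply eq_empty_iff_forall_notMem.mpr
    rintro z ⟨hzD, y, hyD, rfl⟩
    obtain ⟨k, hk, hyk⟩ := mem_iUnion₂.1 hyD
    obtain ⟨k', hk', hzk⟩ := mem_iUnion₂.1 hzD
    have hTy : T y ∈ H (2 * k) := by
      have := (hHrec (2 * k)) ▸ hyk
      exact this.1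
    rcases Nat.lt_trichotomy (2 * k) (2 * k' + 1) with h | h | h
    · exact hHd (2 * k) (2 * k' + 1) h (T y) hTy hzk
    · omega
    · exact hHd (2 * k' + 1) (2 * k) h (T y) hzk hTy
  exact ⟨D, hDc, hfinal, hDT⟩
end
end

section
/- If S ⊆ ℤ is such that every translate S + m (m ∈ ℤ) is a set of recurrence, then S is dense in the Bohr topology on ℤ. -/
noncomputable section

open MeasureTheory Set Filter

/-- The Bohr topology on `ℤ`: the weakest topology making every group homomorphism
`ℤ → ℝ/ℤ` continuous. -/
def bohrTopology : TopologicalSpace ℤ :=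
  ⨅ χ : ℤ →+ AddCircle (1 : ℝ), TopologicalSpace.induced χ inferInstance

lemma addLeft_zpow {G : Type*} [AddGroup G] (a : G) (n : ℤ) :
    ∀ x : G, ((Equiv.addLeft a : Equiv.Perm G) ^ n) x = n • a + x := by
  induction n using Int.induction_on with
  | zero => simp
  | succ k ih =>
      intro x
      rw [zpow_add_one, Equiv.Perm.mul_apply, Equiv.coe_addLeft, ih,
        add_zsmul, one_zsmul]
      exact (add_assoc _ _ _).symm
  | pred k ih =>
      intro x
      rw [zpow_sub_one, Equiv.Perm.mul_apply]
      have h2 : ((Equiv.addLeft a : Equiv.Perm G))⁻¹ x = -a + x := by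
        simp [Equiv.Perm.inv_def]
      rw [h2, ih, sub_zsmul, one_zsmul]
      exact (add_assoc _ _ _).symm

/-- If every translate of `S ⊆ ℤ` is a set of recurrence, then `S` is dense in the
Bohr topology on `ℤ`. -/
theorem statement12 (S : Set ℤ) (hS : ∀ m : ℤ, IsRecurrenceSet (zTranslate S m)) :
    @Dense ℤ bohrTopology S := by
  haveI : Fact ((0:ℝ) < 1) := ⟨one_pos⟩
  haveI : IsProbabilityMeasure (volume : Measure (AddCircle (1:ℝ))) :=
    ⟨by rw [AddCircle.measure_univ]; simp⟩
  set F : ℤ → ((ℤ →+ AddCircle (1:ℝ)) → AddCircle (1:ℝ)) := fun n χ => χ n with hF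
  have hTop : bohrTopology = TopologicalSpace.induced F Pi.topologicalSpace := by
    simp only [bohrTopology, Pi.topologicalSpace, induced_iInf, induced_compose]
    rfl
  rw [hTop]
  letI tB : TopologicalSpace ℤ := TopologicalSpace.induced F Pi.topologicalSpace
  rw [show TopologicalSpace.induced F Pi.topologicalSpace = tB from rfl]
  rw [dense_iff_inter_open]
  rintro U hU ⟨m, hm⟩
  obtain ⟨V, hV, rfl⟩ := isOpen_induced_iff.mp hU
  obtain ⟨I, u, hu, hpi⟩ := isOpen_pi_iff.mp hV (F m) hm
  -- choose radii
  have hradius : ∀ χ : ↑I, ∃ δ > 0, Metric.ball (χ.1 m) δ ⊆ u χ.1 := by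
    intro χ
    exact Metric.isOpen_iff.mp (hu χ.1 χ.2).1 _ (hu χ.1 χ.2).2
  choose f hf0 hfball using hradius
  obtain ⟨ε, hε, hεf⟩ : ∃ ε > 0, ∀ χ : ↑I, ε ≤ f χ := by
    cases isEmpty_or_nonempty ↑I with
    | inl h => exact ⟨1, one_pos, fun χ => (h.false χ).elim⟩
    | inr h =>
        refine ⟨Finset.univ.inf' Finset.univ_nonempty f, ?_, fun χ => Finset.inf'_le _ (Finset.mem_univ χ)⟩
        exact (Finset.lt_inf'_iff _).mpr fun χ _ => hf0 χ
  -- the rotation system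
  set X := (χ : ↑I) → AddCircle (1:ℝ) with hX
  set a : X := fun χ => χ.1 1 with ha
  set 𝒮 : MPSystem :=
    { X := X
      μ := volume
      prob := by infer_instance
      T := MeasurableEquiv.addLeft a
      mp := measurePreserving_add_left volume a } with h𝒮
  set c : X := fun χ => χ.1 m with hc
  set D : Set X := Metric.ball c (ε / 2) with hD
  have hDmeas : MeasurableSet D := measurableSet_ball
  have hDpos : 0 < 𝒮.μ D := Metric.measure_ball_pos volume c (by positivity)
  obtain ⟨n, hnS, hrec⟩ := hS (-m) 𝒮 D hDmeas hDpos
  obtain ⟨s, hsS, rfl⟩ := hnS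
  set n := s + -m with hn
  obtain ⟨y, hyD, x, hxD, hxy⟩ := nonempty_of_measure_ne_zero hrec.ne'
  -- y = n • a + x
  have hiter : ∀ z : X, 𝒮.iter n z = n • a + z := by
    intro z
    have : 𝒮.T.toEquiv = Equiv.addLeft a := Equiv.ext fun _ => rfl
    rw [MPSystem.iter, this]
    exact addLeft_zpow a n z
  rw [hiter] at hxy
  -- key estimate on each coordinate
  have hkey : ∀ χ : ↑I, dist (χ.1 n) 0 < ε := by
    intro χ
    have h1 : dist (y χ) (x χ) ≤ dist y x := dist_le_pi_dist y x χ
    have h2 : dist y x < ε := by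
      calc dist y x ≤ dist y c + dist c x := dist_triangle y c x
        _ < ε / 2 + ε / 2 := by
            have hy' : dist y c < ε / 2 := Metric.mem_ball.mp hyD
            have hx' : dist c x < ε / 2 := by
              rw [dist_comm]; exact Metric.mem_ball.mp hxD
            exact add_lt_add hy' hx'
        _ = ε := by ring
    have h3 : y χ = χ.1 n + x χ := by
      rw [← hxy]
      show (n • a + x) χ = χ.1 n + x χ
      have : n • a χ = χ.1 n := by
        show n • χ.1 1 = χ.1 n
        have h5 : n • χ.1 1 = χ.1 (n • 1) := (map_zsmul χ.1 n (1:ℤ)).symm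
        rw [h5, smul_eq_mul, mul_one]
      simp only [Pi.add_apply, Pi.smul_apply] at *
      rw [← this]
      rfl
    have h4 : dist (y χ) (x χ) = dist (χ.1 n) 0 := by
      rw [h3]; simp [dist_eq_norm]
    rw [← h4]
    exact lt_of_le_of_lt h1 h2
  -- conclude : s ∈ U ∩ S
  refine ⟨s, ?_, hsS⟩
  apply hpi
  intro χ hχ
  apply hfball ⟨χ, hχ⟩
  have : χ s = χ n + χ m := by
    rw [hn]
    rw [← map_add]
    congr 1
    ring
  rw [Metric.mem_ball]
  show dist (χ s) (χ m) < f ⟨χ, hχ⟩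
  rw [this]
  have h6 : dist (χ n + χ m) (χ m) = dist (χ n) 0 := by
    simp [dist_eq_norm]
  rw [h6]
  exact lt_of_lt_of_le (hkey ⟨χ, hχ⟩) (hεf ⟨χ, hχ⟩)
end
end

section
/- Let k, r ∈ ℕ, let A ⊆ Λ_k^r be nonempty, let x ∈ Λ_k^r, and let t > 0. If (A⁻¹A) ∩ U_t(x) = ∅, then |A|/|Λ_k^r| ≤ exp(−t²/(4r)). -/
noncomputable section

open Set Filter

/-- `Λ_k^r`: the set of `r`-tuples of `k`-th roots of unity in `ℂ`. -/
def rootsPow (k r : ℕ) : Set (Fin r → ℂ) := {x | ∀ j, x j ^ k = 1}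

/-- `d(x,y) = ∑_j (1/2)|x_j - y_j|`. -/
noncomputable def hamDist {r : ℕ} (x y : Fin r → ℂ) : ℝ :=
  ∑ j, (1 / 2 : ℝ) * ‖x j - y j‖

/-- The Hamming ball `U_t(x) = {y ∈ Λ_k^r : d(x,y) ≤ t}`. -/
def hammingBall (k r : ℕ) (t : ℝ) (x : Fin r → ℂ) : Set (Fin r → ℂ) :=
  {y ∈ rootsPow k r | hamDist x y ≤ t}

/-- The set `A⁻¹A = {a⁻¹ b : a, b ∈ A}` (coordinatewise operations). -/
def invMulSet {r : ℕ} (A : Set (Fin r → ℂ)) : Set (Fin r → ℂ) :=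
  {z | ∃ a ∈ A, ∃ b ∈ A, z = fun j => (a j)⁻¹ * b j}

set_option linter.unusedSectionVars false

namespace Stmt15Aux

open Finset

variable {α : Type*} [Fintype α] [DecidableEq α]

/-- real-valued Hamming distance on tuples -/
def Hm {n : ℕ} (x y : Fin n → α) : ℝ := ∑ j, if x j = y j then (0:ℝ) else 1

lemma Hm_nonneg {n : ℕ} (x y : Fin n → α) : 0 ≤ Hm x y :=
  Finset.sum_nonneg fun j _ => by split <;> norm_num

lemma Hm_self {n : ℕ} (x : Fin n → α) : Hm x x = 0 := by simp [Hm]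

lemma Hm_comm {n : ℕ} (x y : Fin n → α) : Hm x y = Hm y x := by
  apply Finset.sum_congr rfl
  intro j _
  by_cases h : x j = y j
  · rw [if_pos h, if_pos h.symm]
  · rw [if_neg h, if_neg (Ne.symm h)]

lemma Hm_triangle {n : ℕ} (x y z : Fin n → α) : Hm x z ≤ Hm x y + Hm y z := by
  unfold Hm
  rw [← Finset.sum_add_distrib]
  apply Finset.sum_le_sum
  intro j _
  by_cases hxz : x j = z j
  · rw [if_pos hxz]
    have h1 : (0:ℝ) ≤ if x j = y j then (0:ℝ) else 1 := by split <;> norm_num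
    have h2 : (0:ℝ) ≤ if y j = z j then (0:ℝ) else 1 := by split <;> norm_num
    linarith
  · rw [if_neg hxz]
    by_cases hxy : x j = y j
    · rw [if_pos hxy, if_neg (fun h => hxz (hxy.trans h))]
      norm_num
    · rw [if_neg hxy]
      have h2 : (0:ℝ) ≤ if y j = z j then (0:ℝ) else 1 := by split <;> norm_num
      linarith

lemma Hm_cons {n : ℕ} (s u : α) (y z : Fin n → α) :
    Hm (Fin.cons s y) (Fin.cons u z) = (if s = u then (0:ℝ) else 1) + Hm y z := by
  unfold Hm
  rw [Fin.sum_univ_succ]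
  simp [Fin.cons_zero, Fin.cons_succ]

lemma mgf_bound [Nonempty α] (n : ℕ) (lam : ℝ) (hlam : 0 ≤ lam) (f : (Fin n → α) → ℝ)
    (hf : ∀ y z, f y - f z ≤ lam * Hm y z) :
    (∑ y, Real.exp (f y)) * (∑ z, Real.exp (-f z)) ≤
      (Fintype.card α : ℝ) ^ (2 * n) * Real.exp (n * lam ^ 2 / 2) := by
  induction n with
  | zero =>
      rw [Fintype.sum_unique, Fintype.sum_unique, ← Real.exp_add, add_neg_cancel]
      simp
  | succ n ih =>
      set K : ℝ := (Fintype.card α : ℝ) with hKdef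
      have hK : 0 < K := by
        have := Fintype.card_pos (α := α); positivity
      set P : (Fin n → α) → ℝ := fun y' => ∑ s, Real.exp (f (Fin.cons s y')) with hP
      set Q : (Fin n → α) → ℝ := fun y' => ∑ s, Real.exp (-f (Fin.cons s y')) with hQ
      have hPpos : ∀ y', 0 < P y' := fun y' =>
        Finset.sum_pos (fun s _ => Real.exp_pos _) Finset.univ_nonempty
      have hQpos : ∀ y', 0 < Q y' := fun y' =>
        Finset.sum_pos (fun s _ => Real.exp_pos _) Finset.univ_nonempty
      -- decomposition of sums
      have hdec : ∀ F : (Fin (n+1) → α) → ℝ,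
          ∑ y, F y = ∑ y', ∑ s, F (Fin.cons s y') := by
        intro F
        rw [← Equiv.sum_comp (Fin.consEquiv (fun _ : Fin (n+1) => α)) F, Fintype.sum_prod_type,
          Finset.sum_comm]
        rfl
      -- key per-point inequality
      have key : ∀ y', P y' * Q y' ≤ K ^ 2 * Real.exp (lam ^ 2 / 2) := by
        intro y'
        have habs : ∀ s u : α, |f (Fin.cons s y') - f (Fin.cons u y')| ≤ lam := by
          intro s u
          rw [abs_le]
          constructor
          · have h1 := hf (Fin.cons u y') (Fin.cons s y')
            rw [Hm_cons] at h1
            have h2 : (if u = s then (0:ℝ) else 1) + Hm y' y' ≤ 1 := by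
              rw [Hm_self]; split <;> norm_num
            nlinarith [mul_le_mul_of_nonneg_left h2 hlam]
          · have h1 := hf (Fin.cons s y') (Fin.cons u y')
            rw [Hm_cons] at h1
            have h2 : (if s = u then (0:ℝ) else 1) + Hm y' y' ≤ 1 := by
              rw [Hm_self]; split <;> norm_num
            nlinarith [mul_le_mul_of_nonneg_left h2 hlam]
        have hPQ : P y' * Q y' =
            ∑ s, ∑ u, Real.exp (f (Fin.cons s y') - f (Fin.cons u y')) := by
          rw [Finset.sum_mul_sum]
          apply Finset.sum_congr rfl; intro s _
          apply Finset.sum_congr rfl; intro u _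
          rw [← Real.exp_add]
          ring_nf
        have hswap : ∑ s, ∑ u, Real.exp (f (Fin.cons s y') - f (Fin.cons u y'))
            = ∑ s, ∑ u, Real.exp (-(f (Fin.cons s y') - f (Fin.cons u y'))) := by
          rw [Finset.sum_comm]
          apply Finset.sum_congr rfl; intro s _
          apply Finset.sum_congr rfl; intro u _
          rw [neg_sub]
        have hcosh : ∑ s, ∑ u, Real.exp (f (Fin.cons s y') - f (Fin.cons u y'))
            = ∑ s, ∑ u, Real.cosh (f (Fin.cons s y') - f (Fin.cons u y')) := by
          have h2' : (∑ s : α, ∑ u : α, Real.exp (f (Fin.cons s y') - f (Fin.cons u y')))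
              + (∑ s : α, ∑ u : α, Real.exp (-(f (Fin.cons s y') - f (Fin.cons u y'))))
              = ∑ s : α, ∑ u : α, 2 * Real.cosh (f (Fin.cons s y') - f (Fin.cons u y')) := by
            rw [← Finset.sum_add_distrib]
            apply Finset.sum_congr rfl; intro s _
            rw [← Finset.sum_add_distrib]
            apply Finset.sum_congr rfl; intro u _
            rw [Real.cosh_eq]; ring
          have h3' : ∑ s : α, ∑ u : α, 2 * Real.cosh (f (Fin.cons s y') - f (Fin.cons u y'))
              = 2 * ∑ s : α, ∑ u : α, Real.cosh (f (Fin.cons s y') - f (Fin.cons u y')) := by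
            simp [Finset.mul_sum]
          linarith [hswap]
        have hbound : ∑ s : α, ∑ u : α, Real.cosh (f (Fin.cons s y') - f (Fin.cons u y'))
            ≤ K ^ 2 * Real.exp (lam ^ 2 / 2) := by
          calc ∑ s : α, ∑ u : α, Real.cosh (f (Fin.cons s y') - f (Fin.cons u y'))
              ≤ ∑ s : α, ∑ u : α, Real.exp (lam ^ 2 / 2) := by
                apply Finset.sum_le_sum; intro s _
                apply Finset.sum_le_sum; intro u _
                calc Real.cosh (f (Fin.cons s y') - f (Fin.cons u y'))
                    ≤ Real.cosh lam := by
                      apply Real.cosh_le_cosh.mpr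
                      rw [abs_of_nonneg hlam]
                      exact habs s u
                  _ ≤ Real.exp (lam ^ 2 / 2) := Real.cosh_le_exp_half_sq lam
            _ = K ^ 2 * Real.exp (lam ^ 2 / 2) := by
                simp [Finset.sum_const, Finset.card_univ]
                ring
        rw [hPQ, hcosh]
        exact hbound
      -- g and its properties
      set g : (Fin n → α) → ℝ := fun y' => Real.log (P y' / K) with hg
      have hexpg : ∀ y', Real.exp (g y') = P y' / K := fun y' =>
        Real.exp_log (div_pos (hPpos y') hK)
      have hgLip : ∀ y' z', g y' - g z' ≤ lam * Hm y' z' := by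
        intro y' z'
        have hP' : P y' ≤ Real.exp (lam * Hm y' z') * P z' := by
          rw [Finset.mul_sum]
          apply Finset.sum_le_sum; intro s _
          rw [← Real.exp_add]
          apply Real.exp_le_exp.mpr
          have h1 := hf (Fin.cons s y') (Fin.cons s z')
          rw [Hm_cons, if_pos rfl, zero_add] at h1
          linarith
        have h2 : g y' ≤ lam * Hm y' z' + g z' := by
          calc g y' = Real.log (P y' / K) := rfl
            _ ≤ Real.log (Real.exp (lam * Hm y' z') * P z' / K) := by
                apply Real.log_le_log (div_pos (hPpos y') hK)
                gcongr
            _ = lam * Hm y' z' + g z' := by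
                rw [mul_div_assoc, Real.log_mul (Real.exp_ne_zero _)
                  (ne_of_gt (div_pos (hPpos z') hK)), Real.log_exp]
        linarith
      -- bound on Q/K
      have hQle : ∀ y', Q y' / K ≤ Real.exp (lam ^ 2 / 2) * Real.exp (-(g y')) := by
        intro y'
        rw [Real.exp_neg, hexpg y', inv_div, ← mul_div_assoc,
          div_le_div_iff₀ hK (hPpos y')]
        calc Q y' * P y' = P y' * Q y' := mul_comm _ _
          _ ≤ K ^ 2 * Real.exp (lam ^ 2 / 2) := key y'
          _ = Real.exp (lam ^ 2 / 2) * K * K := by ring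
      -- sums
      have hsumf : ∑ y, Real.exp (f y) = K * ∑ y', Real.exp (g y') := by
        rw [hdec (fun y => Real.exp (f y)), Finset.mul_sum]
        apply Finset.sum_congr rfl; intro y' _
        rw [hexpg y', mul_div_cancel₀ _ (ne_of_gt hK)]
      have hsumnf : ∑ z, Real.exp (-f z) = ∑ y', Q y' := by
        exact hdec (fun z => Real.exp (-f z))
      have hQsum : ∑ y', Q y' ≤ K * (Real.exp (lam ^ 2 / 2) * ∑ y', Real.exp (-(g y'))) := by
        rw [Finset.mul_sum, Finset.mul_sum]
        apply Finset.sum_le_sum; intro y' _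
        have := hQle y'
        calc Q y' = K * (Q y' / K) := by field_simp
          _ ≤ K * (Real.exp (lam ^ 2 / 2) * Real.exp (-(g y'))) := by
              apply mul_le_mul_of_nonneg_left this (le_of_lt hK)
      have hIH := ih g hgLip
      have hgpos : 0 < ∑ y', Real.exp (g y') :=
        Finset.sum_pos (fun y' _ => Real.exp_pos _) Finset.univ_nonempty
      calc (∑ y, Real.exp (f y)) * (∑ z, Real.exp (-f z))
          = (K * ∑ y', Real.exp (g y')) * ∑ y', Q y' := by rw [hsumf, hsumnf]
        _ ≤ (K * ∑ y', Real.exp (g y')) *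
              (K * (Real.exp (lam ^ 2 / 2) * ∑ y', Real.exp (-(g y')))) := by
            apply mul_le_mul_of_nonneg_left hQsum
            positivity
        _ = (K ^ 2 * Real.exp (lam ^ 2 / 2)) *
              ((∑ y', Real.exp (g y')) * ∑ y', Real.exp (-(g y'))) := by ring
        _ ≤ (K ^ 2 * Real.exp (lam ^ 2 / 2)) *
              (K ^ (2 * n) * Real.exp (n * lam ^ 2 / 2)) := by
            apply mul_le_mul_of_nonneg_left hIH
            positivity
        _ = K ^ (2 * (n + 1)) * Real.exp ((n + 1 : ℕ) * lam ^ 2 / 2) := by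
            rw [show ((n + 1 : ℕ) : ℝ) * lam ^ 2 / 2 = (n : ℝ) * lam ^ 2 / 2 + lam ^ 2 / 2 by
                push_cast; ring,
              Real.exp_add, show 2 * (n + 1) = 2 * n + 2 by ring, pow_add]
            ring

lemma sep_bound [Nonempty α] {n : ℕ} (hn : 0 < n) (B C : Finset (Fin n → α))
    (hB : B.Nonempty) (t : ℝ) (ht : 0 < t)
    (hsep : ∀ b ∈ B, ∀ c ∈ C, t ≤ Hm b c) :
    (B.card : ℝ) * C.card ≤ (Fintype.card α : ℝ) ^ (2 * n) * Real.exp (-t ^ 2 / (2 * n)) := by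
  have hn' : (0 : ℝ) < n := by exact_mod_cast hn
  set lam : ℝ := t / n with hlam_def
  have hlam : 0 ≤ lam := le_of_lt (div_pos ht hn')
  set dB : (Fin n → α) → ℝ := fun y => B.inf' hB (fun b => Hm b y) with hdB
  have hdB_nonneg : ∀ y, 0 ≤ dB y := fun y =>
    Finset.le_inf' hB _ (fun b _ => Hm_nonneg b y)
  have hdB_zero : ∀ b ∈ B, dB b = 0 := by
    intro b hb
    refine le_antisymm ?_ (hdB_nonneg b)
    calc dB b ≤ Hm b b := Finset.inf'_le _ hb
      _ = 0 := Hm_self b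
  have hdB_lip : ∀ y z, dB y - dB z ≤ Hm y z := by
    intro y z
    obtain ⟨b₀, hb₀, hEq⟩ := Finset.exists_mem_eq_inf' hB (fun b => Hm b z)
    have h1 : dB y ≤ Hm b₀ y := Finset.inf'_le _ hb₀
    have h2 : Hm b₀ y ≤ Hm b₀ z + Hm z y := Hm_triangle b₀ z y
    have h3 : dB z = Hm b₀ z := hEq
    have h4 : Hm z y = Hm y z := Hm_comm z y
    linarith
  set f : (Fin n → α) → ℝ := fun y => lam * dB y with hf_def
  have hf : ∀ y z, f y - f z ≤ lam * Hm y z := by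
    intro y z
    have := mul_le_mul_of_nonneg_left (hdB_lip y z) hlam
    simp only [hf_def]
    nlinarith [hdB_lip y z]
  have hmain := mgf_bound n lam hlam f hf
  -- lower bounds
  have hBsum : (B.card : ℝ) ≤ ∑ z, Real.exp (-f z) := by
    have h1 : (B.card : ℝ) = ∑ z ∈ B, Real.exp (-f z) := by
      rw [Finset.sum_congr rfl (fun z hz => ?_)]
      · rw [Finset.sum_const, nsmul_eq_mul, mul_one]
      · simp only [hf_def, hdB_zero z hz, mul_zero, neg_zero, Real.exp_zero]
    rw [h1]
    apply Finset.sum_le_sum_of_subset_of_nonneg (Finset.subset_univ B)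
    intro z _ _
    exact le_of_lt (Real.exp_pos _)
  have hCsum : (C.card : ℝ) * Real.exp (lam * t) ≤ ∑ y, Real.exp (f y) := by
    have h1 : (C.card : ℝ) * Real.exp (lam * t) = ∑ y ∈ C, Real.exp (lam * t) := by
      rw [Finset.sum_const, nsmul_eq_mul]
    rw [h1]
    apply le_trans (Finset.sum_le_sum (fun y hy => ?_))
      (Finset.sum_le_sum_of_subset_of_nonneg (Finset.subset_univ C)
        (fun y _ _ => le_of_lt (Real.exp_pos _)))
    apply Real.exp_le_exp.mpr
    have hty : t ≤ dB y := Finset.le_inf' hB _ (fun b hb => hsep b hb y hy)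
    simp only [hf_def]
    exact mul_le_mul_of_nonneg_left hty hlam
  have hprod : (B.card : ℝ) * ((C.card : ℝ) * Real.exp (lam * t)) ≤
      (Fintype.card α : ℝ) ^ (2 * n) * Real.exp (n * lam ^ 2 / 2) := by
    calc (B.card : ℝ) * ((C.card : ℝ) * Real.exp (lam * t))
        ≤ (∑ y, Real.exp (f y)) * (∑ z, Real.exp (-f z)) := by
          rw [mul_comm ((B.card : ℝ))]
          apply mul_le_mul hCsum hBsum (by positivity) (by positivity)
      _ ≤ _ := hmain
  have hexp_eq : Real.exp (n * lam ^ 2 / 2) = Real.exp (-t ^ 2 / (2 * n)) * Real.exp (lam * t) := by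
    rw [← Real.exp_add]
    congr 1
    rw [hlam_def]; field_simp
    ring
  have hEpos : 0 < Real.exp (lam * t) := Real.exp_pos _
  rw [hexp_eq, ← mul_assoc] at hprod
  have := le_of_mul_le_mul_right (by linarith [hprod] : (B.card : ℝ) * (C.card : ℝ) * Real.exp (lam * t) ≤ (Fintype.card α : ℝ) ^ (2 * n) * Real.exp (-t ^ 2 / (2 * n)) * Real.exp (lam * t)) hEpos
  linarith

lemma abs_eq_one_of_pow {k : ℕ} (hk : 0 < k) {z : ℂ} (hz : z ^ k = 1) : ‖z‖ = 1 := by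
  have h : ‖z‖ ^ k = 1 := by rw [← norm_pow, hz, norm_one]
  have h0 : 0 ≤ ‖z‖ := norm_nonneg z
  rcases lt_trichotomy (‖z‖) 1 with hlt | heq | hgt
  · exfalso
    have := pow_lt_one₀ h0 hlt hk.ne'
    rw [h] at this; exact lt_irrefl 1 this
  · exact heq
  · exfalso
    have := one_lt_pow₀ hgt hk.ne'
    rw [h] at this; exact lt_irrefl 1 this

end Stmt15Aux

open Stmt15Aux in
/-- If `A ⊆ Λ_k^r` is nonempty, `x ∈ Λ_k^r`, `t > 0`, and `(A⁻¹A) ∩ U_t(x) = ∅`, then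
`|A|/|Λ_k^r| ≤ exp(-t²/(4r))`. -/
theorem statement15 (k r : ℕ) (hk : 0 < k)
    (A : Set (Fin r → ℂ)) (hA : A ⊆ rootsPow k r) (hne : A.Nonempty)
    (x : Fin r → ℂ) (hx : x ∈ rootsPow k r) (t : ℝ) (ht : 0 < t)
    (hdisj : invMulSet A ∩ hammingBall k r t x = ∅) :
    (Nat.card A : ℝ) / Nat.card (rootsPow k r) ≤ Real.exp (-t ^ 2 / (4 * r)) := by
  classical
  -- r = 0 is contradictory
  rcases Nat.eq_zero_or_pos r with hr0 | hr
  · exfalso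
    obtain ⟨a, ha⟩ := hne
    have hw : (fun j => (a j)⁻¹ * a j) ∈ invMulSet A ∩ hammingBall k r t x := by
      refine ⟨⟨a, ha, a, ha, rfl⟩, ?_, ?_⟩
      · intro j; exact absurd j.2 (by omega)
      · subst hr0
        have : hamDist x (fun j => (a j)⁻¹ * a j) = 0 := by
          simp [hamDist]
        rw [this]; exact le_of_lt ht
    rw [hdisj] at hw; exact hw
  -- setup roots-of-unity fintype
  set α := {z : ℂ // z ^ k = 1} with hα
  haveI : Fintype α := Fintype.ofFinset (Polynomial.nthRootsFinset k (1 : ℂ))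
    (fun z => Polynomial.mem_nthRootsFinset hk (1 : ℂ))
  haveI : Nonempty α := ⟨⟨1, one_pow k⟩⟩
  have hcardα : Fintype.card α = k := by
    rw [Fintype.card_of_subtype (Polynomial.nthRootsFinset k (1 : ℂ))
      (fun z => Polynomial.mem_nthRootsFinset hk (1 : ℂ))]
    exact (Complex.isPrimitiveRoot_exp k hk.ne').card_nthRootsFinset
  have habs1 : ∀ z : α, ‖(z : ℂ)‖ = 1 := fun z => abs_eq_one_of_pow hk z.2
  have hne0 : ∀ z : α, (z : ℂ) ≠ 0 := by
    intro z h0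
    have := habs1 z
    rw [h0] at this; simp at this
  set e : (Fin r → α) → (Fin r → ℂ) := fun f j => (f j : ℂ) with he_def
  have he : Function.Injective e := by
    intro f g h
    funext j
    exact Subtype.ext (congrFun h j)
  set S : Set (Fin r → α) := e ⁻¹' A with hS
  set A' : Finset (Fin r → α) := (Set.toFinite S).toFinset with hA'
  have hmemA' : ∀ f, f ∈ A' ↔ e f ∈ A := by
    intro f; rw [hA', Set.Finite.mem_toFinset]; rfl
  have himg : e '' S = A := by
    apply Set.Subset.antisymm (Set.image_preimage_subset e A)
    intro a ha
    exact ⟨fun j => ⟨a j, hA ha j⟩, ha, rfl⟩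
  have hcardA : (Nat.card A : ℝ) = (A'.card : ℝ) := by
    have h1 : Nat.card A = Nat.card S := by
      rw [← himg, Nat.card_image_of_injective he]
    rw [h1, Nat.card_coe_set_eq]
    have : S = (A' : Set (Fin r → α)) := by rw [hA', Set.Finite.coe_toFinset]
    rw [this, Set.ncard_coe_finset]
  have hcardG : (Nat.card (rootsPow k r) : ℝ) = (k : ℝ) ^ r := by
    have h1 : rootsPow k r = e '' Set.univ := by
      ext z
      constructor
      · intro hz
        exact ⟨fun j => ⟨z j, hz j⟩, Set.mem_univ _, rfl⟩
      · rintro ⟨f, -, rfl⟩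
        intro j
        exact (f j).2
    rw [h1, Nat.card_image_of_injective he, Nat.card_coe_set_eq, Set.ncard_univ,
      Nat.card_eq_fintype_card, Fintype.card_fun, hcardα, Fintype.card_fin]
    push_cast; ring
  -- the translate
  set φ : (Fin r → α) → (Fin r → α) :=
    fun f j => ⟨x j * (f j : ℂ), by rw [mul_pow, hx j, (f j).2, one_mul]⟩ with hφ
  have hφinj : Function.Injective φ := by
    intro f g h
    funext j
    have h1 : x j * (f j : ℂ) = x j * (g j : ℂ) := by
      have := congrFun h j
      exact Subtype.ext_iff.mp this
    have hxj : x j ≠ 0 := by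
      intro h0
      have := hx j
      rw [h0, zero_pow hk.ne'] at this
      exact zero_ne_one this
    exact Subtype.ext (mul_left_cancel₀ hxj h1)
  set C : Finset (Fin r → α) := A'.image φ with hC
  have hCcard : (C.card : ℝ) = (A'.card : ℝ) := by
    rw [hC, Finset.card_image_of_injective _ hφinj]
  have hA'ne : A'.Nonempty := by
    obtain ⟨a, ha⟩ := hne
    exact ⟨fun j => ⟨a j, hA ha j⟩, (hmemA' _).mpr ha⟩
  have hCne : C.Nonempty := hA'ne.image φ
  -- separation
  have hsep : ∀ b ∈ C, ∀ c ∈ A', t ≤ Hm b c := by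
    intro b hb c hc
    rw [hC, Finset.mem_image] at hb
    obtain ⟨g, hg, rfl⟩ := hb
    have hgA : e g ∈ A := (hmemA' g).mp hg
    have hcA : e c ∈ A := (hmemA' c).mp hc
    set w : Fin r → ℂ := fun j => (g j : ℂ)⁻¹ * (c j : ℂ) with hw
    have hwinv : w ∈ invMulSet A := ⟨e g, hgA, e c, hcA, rfl⟩
    have hwroots : w ∈ rootsPow k r := by
      intro j
      rw [hw]
      simp only
      rw [mul_pow, inv_pow, (g j).2, (c j).2, inv_one, one_mul]
    have hwfar : ¬ hamDist x w ≤ t := by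
      intro hle
      have : w ∈ invMulSet A ∩ hammingBall k r t x := ⟨hwinv, hwroots, hle⟩
      rw [hdisj] at this; exact this
    push_neg at hwfar
    have hle2 : hamDist x w ≤ Hm (φ g) c := by
      apply Finset.sum_le_sum
      intro j _
      have key : ‖x j - w j‖ = ‖x j * (g j : ℂ) - (c j : ℂ)‖ := by
        have : x j - w j = (g j : ℂ)⁻¹ * (x j * (g j : ℂ) - (c j : ℂ)) := by
          show x j - (g j : ℂ)⁻¹ * (c j : ℂ) = _
          rw [mul_sub, mul_comm (x j) ((g j : ℂ)), ← mul_assoc,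
            inv_mul_cancel₀ (hne0 (g j)), one_mul]
        rw [this, norm_mul, norm_inv, habs1 (g j), inv_one, one_mul]
      by_cases hj : φ g j = c j
      · rw [if_pos hj]
        have : x j * (g j : ℂ) = (c j : ℂ) := Subtype.ext_iff.mp hj
        rw [key, this, sub_self, norm_zero, mul_zero]
      · rw [if_neg hj, key]
        have h1 : ‖x j * (g j : ℂ) - (c j : ℂ)‖ ≤ 2 := by
          calc ‖x j * (g j : ℂ) - (c j : ℂ)‖
              ≤ ‖x j * (g j : ℂ)‖ + ‖(c j : ℂ)‖ := by
                have h3 := norm_add_le (x j * (g j : ℂ)) (-(c j : ℂ))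
                rw [← sub_eq_add_neg, norm_neg] at h3
                exact h3
            _ ≤ 2 := by
                rw [norm_mul, habs1 (g j), habs1 (c j)]
                have : ‖x j‖ = 1 := abs_eq_one_of_pow hk (hx j)
                rw [this]; norm_num
        linarith
    exact le_trans (le_of_lt hwfar) hle2
  have hmain := sep_bound hr C A' hCne t ht hsep
  rw [hCcard, hcardα] at hmain
  have hr' : (0:ℝ) < r := by exact_mod_cast hr
  have hsq : ((A'.card : ℝ)) ^ 2 ≤ ((k : ℝ) ^ r * Real.exp (-t ^ 2 / (4 * r))) ^ 2 := by
    have h1 : ((k:ℝ)) ^ (2 * r) = ((k:ℝ) ^ r) ^ 2 := by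
      rw [← pow_mul]; ring_nf
    have h2 : Real.exp (-t ^ 2 / (2 * r)) = (Real.exp (-t ^ 2 / (4 * r))) ^ 2 := by
      rw [← Real.exp_nat_mul]
      congr 1
      field_simp
      ring
    calc ((A'.card : ℝ)) ^ 2 = (A'.card : ℝ) * (A'.card : ℝ) := sq (A'.card : ℝ) ▸ by ring
      _ ≤ (k : ℝ) ^ (2 * r) * Real.exp (-t ^ 2 / (2 * r)) := hmain
      _ = ((k : ℝ) ^ r * Real.exp (-t ^ 2 / (4 * r))) ^ 2 := by rw [h1, h2]; ring
  have hle : (A'.card : ℝ) ≤ (k : ℝ) ^ r * Real.exp (-t ^ 2 / (4 * r)) := by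
    have ha : (0:ℝ) ≤ (A'.card : ℝ) := Nat.cast_nonneg _
    have hb : (0:ℝ) ≤ (k : ℝ) ^ r * Real.exp (-t ^ 2 / (4 * r)) := by positivity
    nlinarith
  rw [hcardA, hcardG, div_le_iff₀ (by positivity : (0:ℝ) < (k:ℝ) ^ r)]
  linarith [hle]
end
end

section
/- For all ε, δ > 0 and all k ∈ ℕ, there exists N = N(δ,ε,k) such that: if r > N and A ⊆ Λ_k^r has |A| ≥ δ|Λ_k^r|, then for all x ∈ Λ_k^r there exist a₁, a₂ ∈ A such that a₁⁻¹a₂ ∈ U_{r·ε}(x). -/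
noncomputable section

open Set Filter
open scoped Classical

-- basic hamDist lemmas
lemma hamDist_nonneg {r : ℕ} (x y : Fin r → ℂ) : 0 ≤ hamDist x y :=
  Finset.sum_nonneg fun j _ => by positivity

lemma hamDist_comm {r : ℕ} (x y : Fin r → ℂ) : hamDist x y = hamDist y x := by
  unfold hamDist
  exact Finset.sum_congr rfl fun j _ => by rw [← norm_neg]; ring_nf

lemma hamDist_triangle {r : ℕ} (x y z : Fin r → ℂ) :
    hamDist x z ≤ hamDist x y + hamDist y z := by
  unfold hamDist
  rw [← Finset.sum_add_distrib]
  refine Finset.sum_le_sum fun j _ => ?_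
  have := norm_sub_le_norm_sub_add_norm_sub (x j) (y j) (z j)
  nlinarith [this]

lemma hamDist_cons {r : ℕ} (c c' : ℂ) (y y' : Fin r → ℂ) :
    hamDist (Fin.cons c y) (Fin.cons c' y') = (1/2) * ‖c - c'‖ + hamDist y y' := by
  unfold hamDist
  rw [Fin.sum_univ_succ]
  simp

-- abs of root of unity
lemma abs_eq_one_of_pow {k : ℕ} (hk : 0 < k) {c : ℂ} (h : c ^ k = 1) : ‖c‖ = 1 := by
  have h1 : ‖c‖ ^ k = 1 := by
    rw [← norm_pow, h, norm_one]
  have h0 : (0:ℝ) ≤ ‖c‖ := norm_nonneg c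
  rcases lt_trichotomy (‖c‖) 1 with h | h | h
  · exact absurd h1 (by nlinarith [pow_lt_one₀ h0 h hk.ne'])
  · exact h
  · exact absurd h1 (by nlinarith [one_lt_pow₀ h hk.ne'])

-- core exp inequality
lemma core_ineq {l : ℝ} (h0 : 0 ≤ l) (h1 : l ≤ 1/2) :
    Real.exp (l - 2*l^2) + Real.exp (-l) ≤ 2 := by
  have hy : l - 2*l^2 ≤ 1/8 := by nlinarith [sq_nonneg (4*l-1)]
  have hy0 : 0 ≤ l - 2*l^2 := by nlinarith
  have e1 : Real.exp (l - 2*l^2) * (1 - (l - 2*l^2)) ≤ 1 := by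
    have := Real.add_one_le_exp (-(l - 2*l^2))
    calc Real.exp (l - 2*l^2) * (1 - (l - 2*l^2))
        ≤ Real.exp (l - 2*l^2) * Real.exp (-(l - 2*l^2)) := by
          apply mul_le_mul_of_nonneg_left (by linarith) (Real.exp_nonneg _)
      _ = 1 := by rw [← Real.exp_add]; ring_nf; exact Real.exp_zero
  have e2 : 1 + l + l^2/2 ≤ Real.exp l := Real.quadratic_le_exp_of_nonneg h0
  have e3 : Real.exp (-l) * Real.exp l = 1 := by rw [← Real.exp_add]; ring_nf; exact Real.exp_zero
  have p1 : (0:ℝ) < 1 - (l - 2*l^2) := by nlinarith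
  have p2 : (0:ℝ) < Real.exp l := Real.exp_pos l
  have p3 : (0:ℝ) < Real.exp (-l) := Real.exp_pos _
  have p4 : (0:ℝ) < Real.exp (l - 2*l^2) := Real.exp_pos _
  -- exp(l-2l²) ≤ 1/(1-l+2l²), exp(-l) ≤ 1/(1+l+l²/2)
  have b1 : Real.exp (l - 2*l^2) ≤ 1/(1 - l + 2*l^2) := by
    rw [le_div_iff₀ (by nlinarith)]
    calc Real.exp (l-2*l^2) * (1 - l + 2*l^2) = Real.exp (l-2*l^2) * (1 - (l - 2*l^2)) := by ring
      _ ≤ 1 := e1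
  have b2 : Real.exp (-l) ≤ 1/(1 + l + l^2/2) := by
    rw [le_div_iff₀ (by nlinarith)]
    calc Real.exp (-l) * (1 + l + l^2/2) ≤ Real.exp (-l) * Real.exp l := by
          apply mul_le_mul_of_nonneg_left e2 p3.le
      _ = 1 := e3
  have key : 1/(1 - l + 2*l^2) + 1/(1 + l + l^2/2) ≤ 2 := by
    rw [div_add_div _ _ (by nlinarith) (by nlinarith), div_le_iff₀ (by nlinarith)]
    nlinarith
  linarith

def Om (k r : ℕ) : Finset (Fin r → ℂ) :=
  Fintype.piFinset fun _ => Polynomial.nthRootsFinset k (1 : ℂ)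

lemma mem_Om {k r : ℕ} (hk : 0 < k) {x : Fin r → ℂ} :
    x ∈ Om k r ↔ ∀ j, x j ^ k = 1 := by
  simp [Om, Fintype.mem_piFinset, Polynomial.mem_nthRootsFinset hk]

lemma card_Om {k r : ℕ} (hk : 0 < k) : (Om k r).card = k ^ r := by
  simp [Om, Fintype.card_piFinset,
    (Complex.isPrimitiveRoot_exp k hk.ne').card_nthRootsFinset]

noncomputable def dd {r : ℕ} (A : Finset (Fin r → ℂ)) (x : Fin r → ℂ) : ℝ :=
  if h : A.Nonempty then A.inf' h (fun a => hamDist x a) else 0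

lemma dd_le {r : ℕ} {A : Finset (Fin r → ℂ)} {a : Fin r → ℂ} (ha : a ∈ A)
    (x : Fin r → ℂ) : dd A x ≤ hamDist x a := by
  rw [dd, dif_pos ⟨a, ha⟩]
  exact Finset.inf'_le _ ha

lemma dd_exists {r : ℕ} {A : Finset (Fin r → ℂ)} (h : A.Nonempty) (x : Fin r → ℂ) :
    ∃ a ∈ A, dd A x = hamDist x a := by
  rw [dd, dif_pos h]
  obtain ⟨a, ha, he⟩ := Finset.exists_mem_eq_inf' h (fun a => hamDist x a)
  exact ⟨a, ha, he⟩

-- sum over Om (r+1) decomposes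
lemma sum_Om_succ {k r : ℕ} (f : (Fin (r+1) → ℂ) → ℝ) :
    ∑ x ∈ Om k (r+1), f x
      = ∑ c ∈ Polynomial.nthRootsFinset k (1 : ℂ), ∑ y ∈ Om k r, f (Fin.cons c y) := by
  rw [← Finset.sum_product']
  refine Finset.sum_nbij' (fun x => (x 0, Fin.tail x)) (fun p => Fin.cons p.1 p.2)
    ?_ ?_ ?_ ?_ ?_
  · intro x hx
    simp only [Om, Fintype.mem_piFinset] at hx ⊢
    exact Finset.mk_mem_product (hx 0)
      (Fintype.mem_piFinset.2 fun j => hx j.succ)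
  · intro p hp
    simp only [Finset.mem_product] at hp
    simp only [Om, Fintype.mem_piFinset]
    intro j
    refine Fin.cases ?_ ?_ j
    · simpa using hp.1
    · intro i; simpa using (Fintype.mem_piFinset.1 hp.2) i
  · intro x _; exact Fin.cons_self_tail x
  · intro p _; simp
  · intro x _; rw [Fin.cons_self_tail]

lemma dd_nonneg {r : ℕ} (A : Finset (Fin r → ℂ)) (x : Fin r → ℂ) : 0 ≤ dd A x := by
  rw [dd]
  split
  · next h => exact Finset.le_inf' h _ fun a _ => hamDist_nonneg x a
  · exact le_refl 0

set_option maxHeartbeats 2000000 in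
lemma mgf {k : ℕ} (hk : 0 < k) {l : ℝ} (hl0 : 0 ≤ l) (hl1 : l ≤ 1/2) :
    ∀ r (A : Finset (Fin r → ℂ)), A ⊆ Om k r → A.Nonempty →
    (∑ x ∈ Om k r, Real.exp (l * dd A x)) * A.card
      ≤ (k:ℝ) ^ (2*r) * Real.exp (2*l^2*r) := by
  intro r
  induction r with
  | zero =>
    intro A hsub hne
    have h2 : (Om k 0).card = 1 := by rw [card_Om hk]; norm_num
    have hAeq : A = Om k 0 :=
      Finset.eq_of_subset_of_card_le hsub (by rw [h2]; exact hne.card_pos)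
    obtain ⟨e, he⟩ := Finset.card_eq_one.1 h2
    have hdd : dd A e = 0 := by
      have h1 : dd A e ≤ hamDist e e := dd_le (by rw [hAeq, he]; simp) e
      have h0 : hamDist e e = 0 := by simp [hamDist]
      have := dd_nonneg A e
      linarith
    rw [hAeq, he] at hdd ⊢
    simp [hdd]
  | succ r ih =>
    intro A hsub hne
    set R := Polynomial.nthRootsFinset k (1 : ℂ) with hR
    set Abar := A.image Fin.tail with hAbarDef
    have hAbarsub : Abar ⊆ Om k r := by
      intro y hy
      obtain ⟨a, ha, rfl⟩ := Finset.mem_image.1 hy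
      rw [mem_Om hk]
      exact fun j => (mem_Om hk).1 (hsub ha) j.succ
    have hAbarne : Abar.Nonempty := hne.image _
    set M : ℝ := (Abar.card : ℝ) with hMdef
    have hM1 : (1:ℝ) ≤ M := Nat.one_le_cast.2 hAbarne.card_pos
    have hM0 : (0:ℝ) < M := by linarith
    set K : ℝ := (k:ℝ) ^ (2*r) * Real.exp (2*l^2*r) with hKdef
    have hK0 : 0 < K := by positivity
    set E := Real.exp l with hE
    set D := Real.exp (-l) with hD
    set F := Real.exp (2*l^2) with hF
    have hED : E * D = 1 := by rw [hE, hD, ← Real.exp_add]; simp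
    have hCF : Real.exp (l - 2*l^2) * F = E := by rw [hF, hE, ← Real.exp_add]; ring_nf
    have hcore : Real.exp (l - 2*l^2) + D ≤ 2 := core_ineq hl0 hl1
    have hD1 : D ≤ 1 := by rw [hD]; exact Real.exp_le_one_iff.2 (by linarith)
    have hE0 : 0 < E := Real.exp_pos _
    have hD0 : 0 < D := Real.exp_pos _
    have hF0 : 0 < F := Real.exp_pos _
    have hC0 : 0 < Real.exp (l - 2*l^2) := Real.exp_pos _
    -- slices
    have slice_card : ∀ c : ℂ,
        (((A.filter fun a => a 0 = c).image Fin.tail).card : ℝ)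
          = ((A.filter fun a => a 0 = c).card : ℝ) := by
      intro c
      congr 1
      apply Finset.card_image_of_injOn
      intro a ha b hb hab
      have ha' := (Finset.mem_filter.1 ha).2
      have hb' := (Finset.mem_filter.1 hb).2
      calc a = Fin.cons (a 0) (Fin.tail a) := (Fin.cons_self_tail a).symm
        _ = Fin.cons (b 0) (Fin.tail b) := by rw [ha', hb', hab]
        _ = b := Fin.cons_self_tail b
    have fiber_sum : ∑ c ∈ R, ((A.filter fun a => a 0 = c).card) = A.card := by
      symm
      apply Finset.card_eq_sum_card_fiberwise
      intro a ha
      rw [hR, Finset.mem_coe, Polynomial.mem_nthRootsFinset hk]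
      exact (mem_Om hk).1 (hsub ha) 0
    -- key claim: per-c bound
    have claim : ∀ c ∈ R, ∑ y ∈ Om k r, Real.exp (l * dd A (Fin.cons c y))
        ≤ K * F * (2*M - ((A.filter fun a => a 0 = c).card : ℝ)) / M^2 := by
      intro c hc
      set m : ℝ := ((A.filter fun a => a 0 = c).card : ℝ) with hm
      set Ac := (A.filter fun a => a 0 = c).image Fin.tail with hAc
      have hmAc : (Ac.card : ℝ) = m := slice_card c
      have hAcsub : Ac ⊆ Abar := Finset.image_subset_image (Finset.filter_subset _ _)
      have hmM : m ≤ M := by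
        rw [← hmAc, hMdef]
        exact_mod_cast Finset.card_le_card hAcsub
      have hm0 : 0 ≤ m := by positivity
      -- dd recursion key inequalities
      have key1 : ∀ y, dd A (Fin.cons c y) ≤ 1 + dd Abar y := by
        intro y
        obtain ⟨ab, hab, habe⟩ := dd_exists hAbarne y
        obtain ⟨a, ha, rfl⟩ := Finset.mem_image.1 hab
        have h1 : dd A (Fin.cons c y) ≤ hamDist (Fin.cons c y) a := dd_le ha _
        have h2 : hamDist (Fin.cons c y) a
            = (1/2) * ‖c - a 0‖ + hamDist y (Fin.tail a) := by
          conv_lhs => rw [← Fin.cons_self_tail a]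
          rw [hamDist_cons]
        have h3 : ‖c - a 0‖ ≤ 2 := by
          have hc1 : ‖c‖ = 1 :=
            abs_eq_one_of_pow hk ((Polynomial.mem_nthRootsFinset hk (1 : ℂ)).1 hc)
          have ha1 : ‖a 0‖ = 1 :=
            abs_eq_one_of_pow hk ((mem_Om hk).1 (hsub ha) 0)
          calc ‖c - a 0‖ ≤ ‖c‖ + ‖a 0‖ :=
                norm_sub_le c (a 0)
            _ = 2 := by rw [hc1, ha1]; norm_num
        rw [← habe] at h2
        linarith
      -- branch
      by_cases hbr : M ≤ E * m
      · -- use slice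
        have hmpos : 0 < m := by nlinarith
        have hAcne : Ac.Nonempty := by
          rw [← Finset.card_pos]
          exact_mod_cast (by rw [hmAc]; exact hmpos : (0:ℝ) < (Ac.card : ℝ))
        have key2 : ∀ y, dd A (Fin.cons c y) ≤ dd Ac y := by
          intro y
          obtain ⟨a', ha', hae⟩ := dd_exists hAcne y
          obtain ⟨a, ha, rfl⟩ := Finset.mem_image.1 ha'
          have haf := Finset.mem_filter.1 ha
          have h1 : dd A (Fin.cons c y) ≤ hamDist (Fin.cons c y) a := dd_le haf.1 _
          have h2 : hamDist (Fin.cons c y) a = hamDist y (Fin.tail a) := by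
            conv_lhs => rw [← Fin.cons_self_tail a, haf.2, hamDist_cons]
            simp
          rw [hae, ← h2]
          exact h1
        have hIH := ih Ac (hAcsub.trans hAbarsub) hAcne
        rw [hmAc] at hIH
        have hsum : ∑ y ∈ Om k r, Real.exp (l * dd A (Fin.cons c y))
            ≤ ∑ y ∈ Om k r, Real.exp (l * dd Ac y) := by
          refine Finset.sum_le_sum fun y _ => ?_
          exact Real.exp_le_exp.2 (mul_le_mul_of_nonneg_left (key2 y) hl0)
        have hIH' : ∑ y ∈ Om k r, Real.exp (l * dd Ac y) ≤ K / m := by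
          rw [le_div_iff₀ hmpos]; exact hIH
        refine (hsum.trans hIH').trans ?_
        -- K/m ≤ K*F*(2M-m)/M²
        rw [div_le_div_iff₀ hmpos (by positivity)]
        -- goal K * M^2 ≤ K*F*(2M-m)*m
        have hDE : D * E = 1 := by rw [mul_comm]; exact hED
        have hDm : D * M ≤ m := by
          calc D * M ≤ D * (E * m) := mul_le_mul_of_nonneg_left hbr hD0.le
            _ = (D * E) * m := by ring
            _ = m := by rw [hDE, one_mul]
        have hDMM : D * M ≤ M := by nlinarith [mul_le_mul_of_nonneg_right hD1 hM0.le]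
        have t1 : D*M*(2*M - D*M) ≤ m*(2*M - m) := by
          nlinarith [mul_nonneg (sub_nonneg.2 hDm) (by linarith : (0:ℝ) ≤ 2*M - m - D*M)]
        have t2 : M^2 ≤ F * (m * (2*M - m)) := by
          have t3 : F * (D*M*(2*M - D*M)) ≤ F * (m*(2*M-m)) :=
            mul_le_mul_of_nonneg_left t1 hF0.le
          have h2D : Real.exp (l - 2*l^2) ≤ 2 - D := by linarith
          have h5 : F * D * Real.exp (l - 2*l^2) = 1 := by
            have he9 : F * D * Real.exp (l - 2*l^2) = (Real.exp (l-2*l^2) * F) * D := by ring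
            rw [he9, hCF, hED]
          have t4 : M^2 ≤ F * (D*M*(2*M - D*M)) := by
            calc M^2 = (F * D * Real.exp (l - 2*l^2)) * M^2 := by rw [h5]; ring
              _ ≤ (F * D * (2 - D)) * M^2 := by
                  apply mul_le_mul_of_nonneg_right _ (sq_nonneg M)
                  apply mul_le_mul_of_nonneg_left h2D (by positivity)
              _ = F * (D*M*(2*M - D*M)) := by ring
          linarith
        calc K * M^2 ≤ K * (F * (m * (2*M - m))) := mul_le_mul_of_nonneg_left t2 hK0.le
          _ = K*F*(2*M-m)*m := by ring
      · -- use projection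
        push_neg at hbr
        have hIH := ih Abar hAbarsub hAbarne
        have hsum : ∑ y ∈ Om k r, Real.exp (l * dd A (Fin.cons c y))
            ≤ E * ∑ y ∈ Om k r, Real.exp (l * dd Abar y) := by
          rw [Finset.mul_sum]
          refine Finset.sum_le_sum fun y _ => ?_
          have : Real.exp (l * dd A (Fin.cons c y)) ≤ Real.exp (l * (1 + dd Abar y)) :=
            Real.exp_le_exp.2 (mul_le_mul_of_nonneg_left (key1 y) hl0)
          refine this.trans ?_
          rw [mul_add, mul_one, Real.exp_add, hE]
        have hIH' : ∑ y ∈ Om k r, Real.exp (l * dd Abar y) ≤ K / M := by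
          rw [le_div_iff₀ hM0]; exact hIH
        have hstep : E * (K / M) ≤ K*F*(2*M-m)/M^2 := by
          have hDE : D * E = 1 := by rw [mul_comm]; exact hED
          have hmDM : m ≤ D * M := by
            calc m = (D * E) * m := by rw [hDE, one_mul]
              _ = D * (E * m) := by ring
              _ ≤ D * M := mul_le_mul_of_nonneg_left hbr.le hD0.le
          have hMC : M * E ≤ F * (2*M - m) := by
            have h2D : Real.exp (l - 2*l^2) ≤ 2 - D := by linarith
            calc M * E = M * (Real.exp (l - 2*l^2) * F) := by rw [hCF]
              _ = (F * M) * Real.exp (l - 2*l^2) := by ring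
              _ ≤ (F * M) * (2 - D) := by
                  apply mul_le_mul_of_nonneg_left h2D (by positivity)
              _ = F * (2*M - D*M) := by ring
              _ ≤ F * (2*M - m) := by
                  apply mul_le_mul_of_nonneg_left _ hF0.le
                  linarith
          rw [mul_div_assoc' E K M, div_le_div_iff₀ hM0 (by positivity)]
          calc E * K * M^2 = (K * M) * (M * E) := by ring
            _ ≤ (K * M) * (F * (2*M - m)) :=
                mul_le_mul_of_nonneg_left hMC (by positivity)
            _ = K*F*(2*M-m)*M := by ring
        exact (hsum.trans (mul_le_mul_of_nonneg_left hIH' hE0.le)).trans hstep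
    -- combine over c
    have hRcard : (R.card : ℝ) = (k:ℝ) := by
      exact_mod_cast (Complex.isPrimitiveRoot_exp k hk.ne').card_nthRootsFinset
    set S : ℝ := (A.card : ℝ) with hS
    have hS1 : (1:ℝ) ≤ S := Nat.one_le_cast.2 hne.card_pos
    have hSsum : ∑ c ∈ R, ((A.filter fun a => a 0 = c).card : ℝ) = S := by
      rw [hS, ← fiber_sum]
      push_cast
      ring
    have total : ∑ x ∈ Om k (r+1), Real.exp (l * dd A x)
        ≤ K * F * (2*(k:ℝ)*M - S) / M^2 := by
      rw [sum_Om_succ]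
      calc ∑ c ∈ R, ∑ y ∈ Om k r, Real.exp (l * dd A (Fin.cons c y))
          ≤ ∑ c ∈ R, K * F * (2*M - ((A.filter fun a => a 0 = c).card : ℝ)) / M^2 :=
            Finset.sum_le_sum claim
        _ = (∑ c ∈ R, K * F * (2*M - ((A.filter fun a => a 0 = c).card : ℝ))) / M^2 :=
            by rw [Finset.sum_div]
        _ = K * F * (∑ c ∈ R, (2*M - ((A.filter fun a => a 0 = c).card : ℝ))) / M^2 := by
            rw [Finset.mul_sum]
        _ = K * F * (2*(k:ℝ)*M - S) / M^2 := by
            rw [Finset.sum_sub_distrib, hSsum, Finset.sum_const, nsmul_eq_mul, hRcard]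
            ring_nf
    have hfin : (2*(k:ℝ)*M - S) * S ≤ (k:ℝ)^2 * M^2 := by
      nlinarith [sq_nonneg ((k:ℝ)*M - S)]
    have hS0 : (0:ℝ) ≤ S := by linarith
    calc (∑ x ∈ Om k (r+1), Real.exp (l * dd A x)) * S
        ≤ (K * F * (2*(k:ℝ)*M - S) / M^2) * S := mul_le_mul_of_nonneg_right total hS0
      _ = (K * F / M^2) * ((2*(k:ℝ)*M - S) * S) := by ring
      _ ≤ (K * F / M^2) * ((k:ℝ)^2 * M^2) := mul_le_mul_of_nonneg_left hfin (by positivity)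
      _ = K * F * (k:ℝ)^2 := by field_simp
      _ = (k:ℝ)^(2*(r+1)) * Real.exp (2*l^2*((r+1:ℕ):ℝ)) := by
          rw [hKdef, hF,
            show (2*l^2*((r+1:ℕ):ℝ)) = 2*l^2*(r:ℝ) + 2*l^2 from by push_cast; ring,
            Real.exp_add, show 2*(r+1) = 2*r + 2 from by ring, pow_add]
          ring

set_option maxHeartbeats 1000000 in
lemma pair_close {k : ℕ} (hk : 0 < k) {ε δ : ℝ} (hε : 0 < ε) (hε1 : ε ≤ 1) (hδ : 0 < δ)
    {r : ℕ} (hr : 128 * Real.log (2/δ) / ε^2 < r)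
    (A B : Finset (Fin r → ℂ)) (hA : A ⊆ Om k r) (hB : B ⊆ Om k r)
    (hAc : δ * (k:ℝ)^r ≤ A.card) (hBc : δ * (k:ℝ)^r ≤ B.card) :
    ∃ a ∈ A, ∃ b ∈ B, hamDist a b ≤ ε * r := by
  set l : ℝ := ε/16 with hl
  have hl0 : 0 ≤ l := by positivity
  have hl1 : l ≤ 1/2 := by rw [hl]; linarith
  set t : ℝ := ε * r / 2 with ht
  have hkr1 : (1:ℝ) ≤ (k:ℝ)^r := one_le_pow₀ (Nat.one_le_cast.2 hk)
  have hkr0 : (0:ℝ) < (k:ℝ)^r := by linarith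
  have hexp : Real.exp (2*l^2*r) * (Real.exp (l*t))⁻¹ < δ/2 := by
    have hL : Real.log (2/δ) < ε^2*r/128 := by
      rw [div_lt_iff₀ (by positivity)] at hr
      linarith
    have hlog : Real.log (δ/2) = -Real.log (2/δ) := by
      rw [← Real.log_inv]
      congr 1
      rw [inv_div]
    calc Real.exp (2*l^2*r) * (Real.exp (l*t))⁻¹
        = Real.exp (2*l^2*r - l*t) := by
          rw [← Real.exp_neg, ← Real.exp_add]
          ring_nf
      _ < Real.exp (Real.log (δ/2)) := by
          apply Real.exp_lt_exp.2
          rw [hlog, show 2*l^2*(r:ℝ) - l*t = -(3*ε^2*(r:ℝ)/128) from by rw [hl, ht]; ring]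
          have hεr : (0:ℝ) ≤ ε^2*r := by positivity
          linarith
      _ = δ/2 := Real.exp_log (by positivity)
  have count : ∀ C : Finset (Fin r → ℂ), C ⊆ Om k r → δ * (k:ℝ)^r ≤ C.card →
      (((Om k r).filter fun x => t < dd C x).card : ℝ) < (k:ℝ)^r / 2 := by
    intro C hC hCc
    have hCc0 : (0:ℝ) < (C.card : ℝ) := lt_of_lt_of_le (by positivity) hCc
    have hCne : C.Nonempty := Finset.card_pos.1 (by exact_mod_cast hCc0)
    set Fc := ((Om k r).filter fun x => t < dd C x) with hFc
    have h1 : (Fc.card : ℝ) * Real.exp (l*t) ≤ ∑ x ∈ Om k r, Real.exp (l * dd C x) := by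
      calc (Fc.card : ℝ) * Real.exp (l*t) = ∑ _x ∈ Fc, Real.exp (l*t) := by
            rw [Finset.sum_const, nsmul_eq_mul]
        _ ≤ ∑ x ∈ Fc, Real.exp (l * dd C x) := by
            refine Finset.sum_le_sum fun x hx => ?_
            have := (Finset.mem_filter.1 hx).2
            exact Real.exp_le_exp.2 (mul_le_mul_of_nonneg_left this.le hl0)
        _ ≤ ∑ x ∈ Om k r, Real.exp (l * dd C x) :=
            Finset.sum_le_sum_of_subset_of_nonneg (Finset.filter_subset _ _)
              (fun x _ _ => (Real.exp_pos _).le)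
    have h2 : (∑ x ∈ Om k r, Real.exp (l * dd C x)) * (C.card : ℝ)
        ≤ (k:ℝ)^(2*r) * Real.exp (2*l^2*r) := mgf hk hl0 hl1 r C hC hCne
    have h3 : (Fc.card : ℝ) * (Real.exp (l*t) * (C.card:ℝ))
        ≤ (k:ℝ)^(2*r) * Real.exp (2*l^2*r) := by
      calc (Fc.card : ℝ) * (Real.exp (l*t) * (C.card:ℝ))
          = ((Fc.card : ℝ) * Real.exp (l*t)) * (C.card:ℝ) := by ring
        _ ≤ (∑ x ∈ Om k r, Real.exp (l * dd C x)) * (C.card:ℝ) :=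
            mul_le_mul_of_nonneg_right h1 hCc0.le
        _ ≤ _ := h2
    have e1 : Real.exp (2*l^2*r) < δ/2 * Real.exp (l*t) := by
      have h5 : Real.exp (2*l^2*r) / Real.exp (l*t) < δ/2 := hexp
      rwa [div_lt_iff₀ (Real.exp_pos _)] at h5
    have h4 : (k:ℝ)^(2*r) * Real.exp (2*l^2*r)
        < ((k:ℝ)^r/2) * (Real.exp (l*t) * (C.card:ℝ)) := by
      calc (k:ℝ)^(2*r) * Real.exp (2*l^2*r)
          = ((k:ℝ)^r * (k:ℝ)^r) * Real.exp (2*l^2*r) := by rw [two_mul, pow_add]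
        _ < ((k:ℝ)^r * (k:ℝ)^r) * (δ/2 * Real.exp (l*t)) :=
            mul_lt_mul_of_pos_left e1 (by positivity)
        _ = ((k:ℝ)^r/2) * (Real.exp (l*t) * (δ * (k:ℝ)^r)) := by ring
        _ ≤ ((k:ℝ)^r/2) * (Real.exp (l*t) * (C.card:ℝ)) := by
            apply mul_le_mul_of_nonneg_left _ (by positivity)
            exact mul_le_mul_of_nonneg_left hCc (Real.exp_pos _).le
    exact lt_of_mul_lt_mul_right (h3.trans_lt h4) (by positivity)
  have hA2 := count A hA hAc
  have hB2 := count B hB hBc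
  set U := ((Om k r).filter fun x => t < dd A x) ∪ ((Om k r).filter fun x => t < dd B x)
    with hU
  have hUcard : U.card < (Om k r).card := by
    have hle := Finset.card_union_le ((Om k r).filter fun x => t < dd A x)
      ((Om k r).filter fun x => t < dd B x)
    have : (U.card : ℝ) < ((Om k r).card : ℝ) := by
      rw [card_Om hk]
      push_cast
      calc (U.card : ℝ)
          ≤ ((((Om k r).filter fun x => t < dd A x).card : ℝ)
            + (((Om k r).filter fun x => t < dd B x).card : ℝ)) := by exact_mod_cast hle
        _ < (k:ℝ)^r/2 + (k:ℝ)^r/2 := add_lt_add hA2 hB2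
        _ = (k:ℝ)^r := by ring
    exact_mod_cast this
  have hnot : ¬ (Om k r ⊆ U) := fun hss =>
    absurd (Finset.card_le_card hss) (by omega)
  obtain ⟨x, hxom, hxnot⟩ := Finset.not_subset.1 hnot
  rw [hU, Finset.mem_union] at hxnot
  push_neg at hxnot
  have hdA : dd A x ≤ t := by
    have := hxnot.1
    rw [Finset.mem_filter] at this
    push_neg at this
    exact this hxom
  have hdB : dd B x ≤ t := by
    have := hxnot.2
    rw [Finset.mem_filter] at this
    push_neg at this
    exact this hxom
  have hAne : A.Nonempty :=
    Finset.card_pos.1 (by exact_mod_cast lt_of_lt_of_le (by positivity : (0:ℝ) < δ*(k:ℝ)^r) hAc)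
  have hBne : B.Nonempty :=
    Finset.card_pos.1 (by exact_mod_cast lt_of_lt_of_le (by positivity : (0:ℝ) < δ*(k:ℝ)^r) hBc)
  obtain ⟨a, ha, hae⟩ := dd_exists hAne x
  obtain ⟨b, hb, hbe⟩ := dd_exists hBne x
  refine ⟨a, ha, b, hb, ?_⟩
  calc hamDist a b ≤ hamDist a x + hamDist x b := hamDist_triangle a x b
    _ = dd A x + dd B x := by rw [hamDist_comm a x, ← hae, ← hbe]
    _ ≤ t + t := add_le_add hdA hdB
    _ = ε * r := by rw [ht]; ring

/-- For all `ε, δ > 0` and `k ∈ ℕ` there is `N` such that whenever `r > N` and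
`A ⊆ Λ_k^r` has `|A| ≥ δ|Λ_k^r|`, for every `x ∈ Λ_k^r` there are `a₁, a₂ ∈ A` with
`a₁⁻¹a₂ ∈ U_{r·ε}(x)`. -/
theorem statement16 (ε δ : ℝ) (hε : 0 < ε) (hδ : 0 < δ) (k : ℕ) (hk : 0 < k) :
    ∃ N : ℕ, ∀ r : ℕ, N < r → ∀ A : Set (Fin r → ℂ), A ⊆ rootsPow k r →
      δ * Nat.card (rootsPow k r) ≤ Nat.card A →
      ∀ x ∈ rootsPow k r, ∃ a₁ ∈ A, ∃ a₂ ∈ A,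
        (fun j => (a₁ j)⁻¹ * a₂ j) ∈ hammingBall k r (r * ε) x := by
  set ε' := min ε 1 with hε'def
  have hε'0 : 0 < ε' := lt_min hε (by norm_num)
  have hε'1 : ε' ≤ 1 := min_le_right _ _
  have hε'ε : ε' ≤ ε := min_le_left _ _
  refine ⟨⌈128 * Real.log (2/δ) / ε'^2⌉₊, ?_⟩
  intro r hr A hA hcard x hx
  have hrr : 128 * Real.log (2/δ) / ε'^2 < (r:ℝ) := by
    calc 128 * Real.log (2/δ) / ε'^2 ≤ (⌈128 * Real.log (2/δ) / ε'^2⌉₊ : ℝ) := Nat.le_ceil _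
      _ < r := by exact_mod_cast hr
  have hset : rootsPow k r = ↑(Om k r) := by
    ext y
    simp only [rootsPow, Set.mem_setOf_eq, Finset.coe_sort_coe, Finset.mem_coe, mem_Om hk]
  have hcardOm : Nat.card (rootsPow k r) = k ^ r := by
    rw [hset, Nat.card_coe_set_eq, Set.ncard_coe_finset, card_Om hk]
  have hfin : A.Finite := Set.Finite.subset (by rw [hset]; exact (Om k r).finite_toSet) hA
  set A' := hfin.toFinset with hA'def
  have hcardA : Nat.card A = A'.card := by
    rw [Nat.card_coe_set_eq, Set.ncard_eq_toFinset_card _ hfin]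
  have hmemA' : ∀ {a}, a ∈ A' ↔ a ∈ A := fun {a} => hfin.mem_toFinset
  have hA'sub : A' ⊆ Om k r := by
    intro a ha
    rw [mem_Om hk]
    exact hA (hmemA'.1 ha)
  have hcardA' : δ * (k:ℝ)^r ≤ (A'.card : ℝ) := by
    rw [hcardOm, hcardA] at hcard
    exact_mod_cast hcard
  -- the translate B' = A' * x
  have hx0 : ∀ j, x j ≠ 0 := by
    intro j h0
    have := hx j
    rw [h0, zero_pow hk.ne'] at this
    exact zero_ne_one this
  have hinj : Function.Injective (fun a : Fin r → ℂ => fun j => a j * x j) := by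
    intro a b h
    funext j
    exact mul_right_cancel₀ (hx0 j) (congrFun h j)
  set B' := A'.image (fun a => fun j => a j * x j) with hB'def
  have hB'sub : B' ⊆ Om k r := by
    intro b hb
    obtain ⟨a, ha, rfl⟩ := Finset.mem_image.1 hb
    rw [mem_Om hk]
    intro j
    rw [mul_pow, hx j, (mem_Om hk).1 (hA'sub ha) j, one_mul]
  have hcardB' : δ * (k:ℝ)^r ≤ (B'.card : ℝ) := by
    rw [hB'def, Finset.card_image_of_injective _ hinj]
    exact hcardA'
  obtain ⟨a₂, ha₂, bb, hbb, hdist⟩ :=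
    pair_close hk hε'0 hε'1 hδ hrr A' B' hA'sub hB'sub hcardA' hcardB'
  obtain ⟨a₁, ha₁, rfl⟩ := Finset.mem_image.1 hbb
  refine ⟨a₁, hmemA'.1 ha₁, a₂, hmemA'.1 ha₂, ?_, ?_⟩
  · -- membership in rootsPow
    intro j
    rw [mul_pow, inv_pow, (mem_Om hk).1 (hA'sub ha₁) j, (mem_Om hk).1 (hA'sub ha₂) j,
      inv_one, one_mul]
  · -- distance bound
    have habs1 : ∀ j, ‖a₁ j‖ = 1 :=
      fun j => abs_eq_one_of_pow hk ((mem_Om hk).1 (hA'sub ha₁) j)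
    have heq : hamDist x (fun j => (a₁ j)⁻¹ * a₂ j) = hamDist a₂ (fun j => a₁ j * x j) := by
      unfold hamDist
      refine Finset.sum_congr rfl fun j _ => ?_
      have ha₁0 : a₁ j ≠ 0 := fun h0 => by
        have := habs1 j
        rw [h0] at this
        simp at this
      have hfac : a₁ j * (x j - (a₁ j)⁻¹ * a₂ j) = a₁ j * x j - a₂ j := by
        field_simp
      have : ‖x j - (a₁ j)⁻¹ * a₂ j‖
          = ‖a₂ j - a₁ j * x j‖ := by
        calc ‖x j - (a₁ j)⁻¹ * a₂ j‖
            = ‖a₁ j‖ * ‖x j - (a₁ j)⁻¹ * a₂ j‖ := by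
              rw [habs1 j, one_mul]
          _ = ‖a₁ j * (x j - (a₁ j)⁻¹ * a₂ j)‖ := (norm_mul _ _).symm
          _ = ‖a₁ j * x j - a₂ j‖ := by rw [hfac]
          _ = ‖a₂ j - a₁ j * x j‖ := norm_sub_rev _ _
      rw [this]
    rw [heq]
    calc hamDist a₂ (fun j => a₁ j * x j) ≤ ε' * r := hdist
      _ ≤ ε * r := mul_le_mul_of_nonneg_right hε'ε (Nat.cast_nonneg r)
      _ = r * ε := mul_comm _ _
end
end

section
/- Let F ⊆ ℤ be a finite set and let A ⊆ ℤ. Then there exists n ∈ ℤ such that |(A − n) ∩ F| ≥ d*(A) · |F|. -/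
noncomputable section

open Set Filter

/-- The upper Banach density of a set of integers:
`d*(A) = lim_{N → ∞} sup_M |A ∩ [M, M+N-1]| / N`. -/
noncomputable def upperBanachDensity (A : Set ℤ) : ℝ :=
  limsup (fun N : ℕ => ⨆ M : ℤ, (Nat.card ↥(A ∩ Set.Icc M (M + N - 1)) : ℝ) / N) atTop

open scoped Classical

private lemma count_shift (A : Set ℤ) (F : Finset ℤ) (n : ℤ) :
    Nat.card ↥((fun a => a - n) '' A ∩ ↑F) = (F.filter fun f => f + n ∈ A).card := by
  have h : (fun a => a - n) '' A ∩ ↑F = ↑(F.filter fun f => f + n ∈ A) := by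
    ext f
    simp only [Set.mem_inter_iff, Set.mem_image, Finset.coe_filter, Set.mem_setOf_eq,
      Finset.mem_coe]
    constructor
    · rintro ⟨⟨a, ha, rfl⟩, hf⟩
      exact ⟨hf, by simpa using ha⟩
    · rintro ⟨hf, ha⟩
      exact ⟨⟨f + n, ha, by ring⟩, hf⟩
  rw [h, Nat.card_coe_set_eq, Set.ncard_coe_finset]

private lemma interval_count (A : Set ℤ) (a b : ℤ) :
    Nat.card ↥(A ∩ Set.Icc a b) = ((Finset.Icc a b).filter (· ∈ A)).card := by
  have h : A ∩ Set.Icc a b = ↑((Finset.Icc a b).filter (· ∈ A)) := by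
    ext x
    simp only [Set.mem_inter_iff, Finset.coe_filter, Set.mem_setOf_eq, Finset.mem_Icc,
      Set.mem_Icc]
    tauto
  rw [h, Nat.card_coe_set_eq, Set.ncard_coe_finset]

private lemma card_shift (A : Set ℤ) (a b f : ℤ) :
    ((Finset.Icc a b).filter fun n => f + n ∈ A).card
      = ((Finset.Icc (a + f) (b + f)).filter (· ∈ A)).card := by
  have h : (Finset.Icc (a + f) (b + f)).filter (· ∈ A)
      = ((Finset.Icc a b).filter fun n => f + n ∈ A).image (fun n => n + f) := by
    ext m
    simp only [Finset.mem_filter, Finset.mem_Icc, Finset.mem_image]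
    constructor
    · rintro ⟨⟨h1, h2⟩, hm⟩
      exact ⟨m - f, ⟨⟨by omega, by omega⟩, by simpa [add_comm, add_sub_cancel] using hm⟩, by ring⟩
    · rintro ⟨n, ⟨⟨h1, h2⟩, hn⟩, rfl⟩
      exact ⟨⟨by omega, by omega⟩, by simpa [add_comm] using hn⟩
  rw [h, Finset.card_image_of_injective _ (add_left_injective f)]

private lemma filter_Icc_le (p : ℤ → Prop) [DecidablePred p] (a b f : ℤ) :
    ((Finset.Icc a b).filter p).card ≤ ((Finset.Icc (a + f) (b + f)).filter p).card + f.natAbs := by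
  have hsub : (Finset.Icc a b).filter p ⊆
      ((Finset.Icc (a + f) (b + f)).filter p) ∪ ((Finset.Icc a b) \ (Finset.Icc (a + f) (b + f))) := by
    intro n hn
    rw [Finset.mem_filter] at hn
    by_cases h : n ∈ Finset.Icc (a + f) (b + f)
    · exact Finset.mem_union_left _ (Finset.mem_filter.2 ⟨h, hn.2⟩)
    · exact Finset.mem_union_right _ (Finset.mem_sdiff.2 ⟨hn.1, h⟩)
  have hd : ((Finset.Icc a b) \ (Finset.Icc (a + f) (b + f))).card ≤ f.natAbs := by
    rcases le_or_gt 0 f with hf | hf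
    · have hs : (Finset.Icc a b) \ (Finset.Icc (a + f) (b + f)) ⊆ Finset.Icc a (a + f - 1) := by
        intro n hn
        simp only [Finset.mem_sdiff, Finset.mem_Icc, not_and, not_le] at hn
        simp only [Finset.mem_Icc]
        omega
      calc ((Finset.Icc a b) \ (Finset.Icc (a + f) (b + f))).card
          ≤ (Finset.Icc a (a + f - 1)).card := Finset.card_le_card hs
        _ = (a + f - 1 + 1 - a).toNat := Int.card_Icc _ _
        _ ≤ f.natAbs := by omega
    · have hs : (Finset.Icc a b) \ (Finset.Icc (a + f) (b + f)) ⊆ Finset.Icc (b + f + 1) b := by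
        intro n hn
        simp only [Finset.mem_sdiff, Finset.mem_Icc, not_and, not_le] at hn
        simp only [Finset.mem_Icc]
        omega
      calc ((Finset.Icc a b) \ (Finset.Icc (a + f) (b + f))).card
          ≤ (Finset.Icc (b + f + 1) b).card := Finset.card_le_card hs
        _ = (b + 1 - (b + f + 1)).toNat := Int.card_Icc _ _
        _ ≤ f.natAbs := by omega
  calc ((Finset.Icc a b).filter p).card
      ≤ (((Finset.Icc (a + f) (b + f)).filter p) ∪ ((Finset.Icc a b) \ (Finset.Icc (a + f) (b + f)))).card :=
        Finset.card_le_card hsub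
    _ ≤ ((Finset.Icc (a + f) (b + f)).filter p).card + ((Finset.Icc a b) \ (Finset.Icc (a + f) (b + f))).card :=
        Finset.card_union_le _ _
    _ ≤ _ := by omega

private lemma key_count (A : Set ℤ) (F : Finset ℤ) (c : ℕ)
    (hc : ∀ n : ℤ, (F.filter fun f => f + n ∈ A).card ≤ c) (M : ℤ) (N : ℕ) (hN : 1 ≤ N) :
    F.card * ((Finset.Icc M (M + N - 1)).filter (· ∈ A)).card
      ≤ N * c + F.card * (F.sup Int.natAbs) := by
  set I : Finset ℤ := Finset.Icc M (M + N - 1) with hI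
  have hIcard : I.card = N := by
    rw [hI, Int.card_Icc]
    omega
  have h1 : ∀ f ∈ F, (I.filter (· ∈ A)).card
      ≤ (I.filter fun n => f + n ∈ A).card + F.sup Int.natAbs := by
    intro f hf
    have h2 := filter_Icc_le (· ∈ A) M (M + N - 1) f
    rw [← card_shift A M (M + N - 1) f] at h2
    exact h2.trans (add_le_add_right (Finset.le_sup hf) _)
  have hsum : ∑ f ∈ F, (I.filter fun n => f + n ∈ A).card
      = ∑ n ∈ I, (F.filter fun f => f + n ∈ A).card := by
    simp only [Finset.card_filter]
    exact Finset.sum_comm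
  calc F.card * (I.filter (· ∈ A)).card
      = ∑ _f ∈ F, (I.filter (· ∈ A)).card := by rw [Finset.sum_const, smul_eq_mul]
    _ ≤ ∑ f ∈ F, ((I.filter fun n => f + n ∈ A).card + F.sup Int.natAbs) :=
        Finset.sum_le_sum h1
    _ = (∑ n ∈ I, (F.filter fun f => f + n ∈ A).card) + F.card * F.sup Int.natAbs := by
        rw [Finset.sum_add_distrib, hsum, Finset.sum_const, smul_eq_mul]
    _ ≤ (∑ _n ∈ I, c) + F.card * F.sup Int.natAbs := by
        gcongr with n hn
        exact hc n
    _ = N * c + F.card * F.sup Int.natAbs := by rw [Finset.sum_const, smul_eq_mul, hIcard]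

/-- For every finite `F ⊆ ℤ` and every `A ⊆ ℤ` there is `n ∈ ℤ` with
`|(A - n) ∩ F| ≥ d*(A)·|F|`. -/
theorem statement19 (F : Finset ℤ) (A : Set ℤ) :
    ∃ n : ℤ, upperBanachDensity A * F.card ≤ Nat.card ↥((fun a => a - n) '' A ∩ ↑F) := by
  rcases Nat.eq_zero_or_pos F.card with hb | hb
  · exact ⟨0, by rw [hb]; simpa using Nat.cast_nonneg _⟩
  set count : ℤ → ℕ := fun n => (F.filter fun f => f + n ∈ A).card with hcount
  have hbdd : BddAbove (Set.range count) :=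
    ⟨F.card, by rintro _ ⟨n, rfl⟩; exact Finset.card_filter_le _ _⟩
  set c : ℕ := sSup (Set.range count) with hcdef
  obtain ⟨n₀, hn₀⟩ : c ∈ Set.range count := Nat.sSup_mem ⟨count 0, ⟨0, rfl⟩⟩ hbdd
  have hle : ∀ n, count n ≤ c := fun n => le_csSup hbdd ⟨n, rfl⟩
  refine ⟨n₀, ?_⟩
  rw [count_shift A F n₀]
  show upperBanachDensity A * F.card ≤ (count n₀ : ℝ)
  rw [hn₀]
  have hb' : (0 : ℝ) < F.card := by exact_mod_cast hb
  suffices h : upperBanachDensity A ≤ (c : ℝ) / F.card by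
    calc upperBanachDensity A * F.card ≤ ((c : ℝ) / F.card) * F.card :=
          mul_le_mul_of_nonneg_right h hb'.le
      _ = c := div_mul_cancel₀ _ hb'.ne'
  set R : ℕ := F.sup Int.natAbs with hR
  set g : ℕ → ℝ := fun N => (c : ℝ) / F.card + R / N with hg
  have hfg : (fun N : ℕ => ⨆ M : ℤ, (Nat.card ↥(A ∩ Set.Icc M (M + N - 1)) : ℝ) / N)
      ≤ᶠ[atTop] g := by
    filter_upwards [eventually_ge_atTop 1] with N hN
    apply ciSup_le
    intro M
    rw [interval_count]
    have hkey := key_count A F c hle M N hN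
    have hkey' : (F.card : ℝ) * ((Finset.Icc M (M + N - 1)).filter (· ∈ A)).card
        ≤ N * c + F.card * R := by exact_mod_cast hkey
    have hN' : (0 : ℝ) < N := by exact_mod_cast hN
    show _ ≤ (c : ℝ) / F.card + (R : ℝ) / N
    rw [div_add_div _ _ hb'.ne' hN'.ne', div_le_div_iff₀ hN' (by positivity)]
    nlinarith
  have hgt : Tendsto g atTop (nhds ((c : ℝ) / F.card)) := by
    have h0 : Tendsto (fun N : ℕ => (R : ℝ) / N) atTop (nhds 0) := by
      simpa [div_eq_mul_inv] using
        (tendsto_one_div_atTop_nhds_zero_nat.const_mul (R : ℝ))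
    simpa using tendsto_const_nhds.add h0
  have hcob : IsCoboundedUnder (· ≤ ·) atTop
      (fun N : ℕ => ⨆ M : ℤ, (Nat.card ↥(A ∩ Set.Icc M (M + N - 1)) : ℝ) / N) := by
    apply isCoboundedUnder_le_of_le atTop (x := 0)
    intro N
    exact Real.iSup_nonneg fun M => by positivity
  calc upperBanachDensity A
      ≤ limsup g atTop := limsup_le_limsup hfg hcob hgt.isBoundedUnder_le
    _ = (c : ℝ) / F.card := hgt.limsup_eq
end
end
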